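/- arXiv:2411.19705 — 5 statements merged into one kernel-verified Lean document; each statement's English description precedes it below -/
import Mathlib

section
/- Let μ be a finite nonnegative Borel measure on [0,2π), n ≥ 1, and let P be a polynomial of degree n+1 over ℂ such that ∫₀^{2π} P(e^{iθ}) · conj(g(e^{iθ})) dμ(θ) = 0 for every polynomial g with deg g ≤ n and g(0) = 0. Suppose ζ ∈ ℂ with |ζ| = 1 and P(ζ) = 0, and let q be the polynomial of degree n with P(z) = (z−ζ)·q(z). Then for every nonzero polynomial h with deg h ≤ n, ∫₀^{2π} q(e^{iθ}) · conj(h(e^{iθ})) dμ(θ) = conj(h(ζ)) · ∫₀^{2π} q(e^{iθ}) dμ(θ). -/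
open MeasureTheory Polynomial Real

/-- If `P` of degree `n+1` satisfies the paraorthogonality relations and `ζ` is a zero
of `P` on the unit circle, with `P(z) = (z - ζ) q(z)`, then
`∫ q(e^{iθ}) conj(h(e^{iθ})) dμ = conj(h(ζ)) ∫ q(e^{iθ}) dμ` for every nonzero
polynomial `h` of degree at most `n`. -/
theorem popuc_zero_property
    (μ : Measure ℝ) [IsFiniteMeasure μ] (n : ℕ) (hn : 1 ≤ n)
    (P : Polynomial ℂ) (hPdeg : P.natDegree = n + 1)
    (hpara : ∀ g : Polynomial ℂ, g.natDegree ≤ n → g.eval 0 = 0 →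
      ∫ θ in Set.Ico 0 (2 * π),
        P.eval (Complex.exp (θ * Complex.I)) *
          (starRingEnd ℂ) (g.eval (Complex.exp (θ * Complex.I))) ∂μ = 0)
    (ζ : ℂ) (hζ : ‖ζ‖ = 1) (hPζ : P.eval ζ = 0)
    (q : Polynomial ℂ) (hq : P = (X - C ζ) * q) (hqdeg : q.natDegree = n)
    (h : Polynomial ℂ) (hne : h ≠ 0) (hdeg : h.natDegree ≤ n) :
    ∫ θ in Set.Ico 0 (2 * π),
      q.eval (Complex.exp (θ * Complex.I)) *
        (starRingEnd ℂ) (h.eval (Complex.exp (θ * Complex.I))) ∂μ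
      = (starRingEnd ℂ) (h.eval ζ) *
        ∫ θ in Set.Ico 0 (2 * π), q.eval (Complex.exp (θ * Complex.I)) ∂μ := by
  obtain ⟨r, hr⟩ : (X - C ζ) ∣ (h - C (h.eval ζ)) := by
    apply dvd_iff_isRoot.mpr
    simp [IsRoot]
  set g : Polynomial ℂ := -(C ζ) * X * r with hg
  have hrdeg : r.natDegree ≤ n - 1 := by
    rcases eq_or_ne r 0 with h0 | h0
    · simp [h0]
    · have hne' : (X - C ζ) ≠ 0 := X_sub_C_ne_zero ζ
      have := natDegree_mul hne' h0
      rw [← hr] at this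
      have hle : (h - C (h.eval ζ)).natDegree ≤ n := by
        refine le_trans (natDegree_sub_le _ _) ?_
        simp [hdeg]
      rw [this, natDegree_X_sub_C] at hle
      omega
  have hgdeg : g.natDegree ≤ n := by
    refine le_trans (natDegree_mul_le) ?_
    have h1 : (-(C ζ) * X).natDegree ≤ 1 := by
      refine le_trans (natDegree_mul_le) ?_
      simp
    omega
  have hg0 : g.eval 0 = 0 := by simp [hg]
  have hζ1 : ζ * (starRingEnd ℂ) ζ = 1 := by
    rw [Complex.mul_conj]
    norm_cast
    rw [Complex.normSq_eq_norm_sq, hζ]; norm_num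
  -- pointwise identity
  have key : ∀ θ : ℝ,
      q.eval (Complex.exp (θ * Complex.I)) *
          (starRingEnd ℂ) (h.eval (Complex.exp (θ * Complex.I)))
        = (starRingEnd ℂ) (h.eval ζ) * q.eval (Complex.exp (θ * Complex.I))
          + P.eval (Complex.exp (θ * Complex.I)) *
            (starRingEnd ℂ) (g.eval (Complex.exp (θ * Complex.I))) := by
    intro θ
    set z : ℂ := Complex.exp (θ * Complex.I) with hz
    have hz1 : z * (starRingEnd ℂ) z = 1 := by
      rw [Complex.mul_conj]
      norm_cast
      rw [Complex.normSq_eq_norm_sq, Complex.norm_exp]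
      simp
    have hhz : h.eval z = h.eval ζ + (z - ζ) * r.eval z := by
      have := congrArg (eval z) hr
      simp only [eval_sub, eval_mul, eval_X, eval_C] at this
      linear_combination this
    rw [hq]
    simp only [hg, eval_mul, eval_sub, eval_X, eval_C, eval_neg, map_mul, map_add, map_sub, map_neg, map_one]
    rw [hhz]
    simp only [map_add, map_mul, map_sub]
    linear_combination (eval z q * (starRingEnd ℂ) (eval z r) * (starRingEnd ℂ) ζ) * hz1
      - (eval z q * (starRingEnd ℂ) (eval z r) * (starRingEnd ℂ) z) * hζ1
  -- integrability
  have hcont : Continuous fun θ : ℝ => Complex.exp (θ * Complex.I) :=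
    Complex.continuous_exp.comp ((Complex.continuous_ofReal).mul continuous_const)
  have hint : ∀ p : Polynomial ℂ,
      IntegrableOn (fun θ : ℝ => p.eval (Complex.exp (θ * Complex.I))) (Set.Ico 0 (2*π)) μ := by
    intro p
    exact ((p.continuous_aeval.comp hcont).integrableOn_Icc).mono_set Set.Ico_subset_Icc_self
  have hintc : ∀ p s : Polynomial ℂ,
      IntegrableOn (fun θ : ℝ => p.eval (Complex.exp (θ * Complex.I)) *
        (starRingEnd ℂ) (s.eval (Complex.exp (θ * Complex.I)))) (Set.Ico 0 (2*π)) μ := by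
    intro p s
    exact (((p.continuous_aeval.comp hcont).mul
      (Complex.continuous_conj.comp (s.continuous_aeval.comp hcont))).integrableOn_Icc).mono_set
      Set.Ico_subset_Icc_self
  calc ∫ θ in Set.Ico 0 (2 * π),
      q.eval (Complex.exp (θ * Complex.I)) *
        (starRingEnd ℂ) (h.eval (Complex.exp (θ * Complex.I))) ∂μ
      = ∫ θ in Set.Ico 0 (2 * π),
          ((starRingEnd ℂ) (h.eval ζ) * q.eval (Complex.exp (θ * Complex.I))
            + P.eval (Complex.exp (θ * Complex.I)) *
              (starRingEnd ℂ) (g.eval (Complex.exp (θ * Complex.I)))) ∂μ := by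
        exact integral_congr_ae (Filter.Eventually.of_forall fun θ => key θ)
    _ = (∫ θ in Set.Ico 0 (2 * π),
          (starRingEnd ℂ) (h.eval ζ) * q.eval (Complex.exp (θ * Complex.I)) ∂μ)
        + ∫ θ in Set.Ico 0 (2 * π),
            P.eval (Complex.exp (θ * Complex.I)) *
              (starRingEnd ℂ) (g.eval (Complex.exp (θ * Complex.I))) ∂μ := by
        exact integral_add ((hint q).const_mul _) (hintc P g)
    _ = (starRingEnd ℂ) (h.eval ζ) *
        ∫ θ in Set.Ico 0 (2 * π), q.eval (Complex.exp (θ * Complex.I)) ∂μ := by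
        rw [hpara g hgdeg hg0, add_zero, integral_const_mul]
end

section
/- Let n ≥ 2 and let φ_1,…,φ_n, θ ∈ ℝ be such that e^{iθ} ≠ e^{iφ_k} for k = 1,…,n. Then, as an identity of complex numbers, Σ_{k=1}^{n−2} cot((φ_k−θ)/2) + (1/2)·cot((φ_{n−1}−θ)/2) + (1/2)·cot((φ_n−θ)/2) = −i·(1 − Σ_{k=1}^{n} e^{−iθ}/(e^{−iθ} − e^{−iφ_k}) + Σ_{k=1}^{n−2} e^{iθ}/(e^{iθ} − e^{iφ_k})). In particular the right-hand side is real. -/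
open Complex

lemma cot_key (θ φ : ℝ) (h : Complex.exp (θ * Complex.I) ≠ Complex.exp (φ * Complex.I)) :
    ((Real.cot ((φ - θ) / 2) : ℝ) : ℂ) =
      -Complex.I * (Complex.exp (θ * Complex.I) / (Complex.exp (θ * Complex.I) - Complex.exp (φ * Complex.I))
        - Complex.exp (-θ * Complex.I) / (Complex.exp (-θ * Complex.I) - Complex.exp (-φ * Complex.I))) := by
  set u := Complex.exp (θ * Complex.I) with hu
  set v := Complex.exp (φ * Complex.I) with hv
  have hu0 : u ≠ 0 := Complex.exp_ne_zero _
  have hv0 : v ≠ 0 := Complex.exp_ne_zero _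
  have huv : u - v ≠ 0 := sub_ne_zero.2 h
  have hvu : v - u ≠ 0 := fun hc => huv (by linear_combination -hc)
  have hnu : Complex.exp (-θ * Complex.I) = u⁻¹ := by
    rw [hu, ← Complex.exp_neg]; ring_nf
  have hnv : Complex.exp (-φ * Complex.I) = v⁻¹ := by
    rw [hv, ← Complex.exp_neg]; ring_nf
  have hfrac : u⁻¹ / (u⁻¹ - v⁻¹) = v / (v - u) := by
    rw [div_eq_div_iff _ hvu]
    · field_simp
    · intro hc
      apply hvu
      field_simp at hc
      rw [hc]; ring
  set w := Complex.exp (((φ - θ) / 2 : ℝ) * Complex.I) with hw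
  have hw0 : w ≠ 0 := Complex.exp_ne_zero _
  have hww : w * w = v * u⁻¹ := by
    rw [hw, hv, hu, ← Complex.exp_neg, ← Complex.exp_add, ← Complex.exp_add]
    congr 1
    push_cast
    ring
  have hww' : w * w * u = v := by rw [hww]; field_simp
  have hwi : w⁻¹ = w * u / v := by
    rw [eq_div_iff hv0, inv_mul_eq_iff_eq_mul₀ hw0]
    linear_combination -hww'
  have hsinval : Complex.sin (((φ - θ) / 2 : ℝ)) = (w - w * u / v) / (2 * Complex.I) := by
    rw [Complex.sin, ← hwi, hw, ← Complex.exp_neg]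
    rw [div_mul_eq_div_div, Complex.div_I]
    ring_nf
  have hcosval : Complex.cos (((φ - θ) / 2 : ℝ)) = (w + w * u / v) / 2 := by
    rw [Complex.cos, ← hwi, hw, ← Complex.exp_neg]
    ring_nf
  have hwinv : w - w * u / v ≠ 0 := by
    intro hc
    field_simp at hc
    rcases mul_eq_zero.1 (show w * (v - u) = 0 by linear_combination hc) with h1 | h1
    · exact hw0 h1
    · exact hvu h1
  have hsin0 : Complex.sin (((φ - θ) / 2 : ℝ)) ≠ 0 := by
    rw [hsinval]
    exact div_ne_zero hwinv (by simp [Complex.I_ne_zero])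
  rw [Complex.ofReal_cot, Complex.cot_eq_cos_div_sin, hsinval, hcosval, hnu, hnv, hfrac]
  have hq : w * v - w * u ≠ 0 := by
    intro hc
    rcases mul_eq_zero.1 (show w * (v - u) = 0 by linear_combination hc) with h1 | h1
    · exact hw0 h1
    · exact hvu h1
  rw [div_div_div_comm]
  field_simp
  ring_nf

lemma AB_sum (θ φ : ℝ) (h : Complex.exp (θ * Complex.I) ≠ Complex.exp (φ * Complex.I)) :
    Complex.exp (-θ * Complex.I) / (Complex.exp (-θ * Complex.I) - Complex.exp (-φ * Complex.I))
      + Complex.exp (θ * Complex.I) / (Complex.exp (θ * Complex.I) - Complex.exp (φ * Complex.I)) = 1 := by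
  set u := Complex.exp (θ * Complex.I) with hu
  set v := Complex.exp (φ * Complex.I) with hv
  have hu0 : u ≠ 0 := Complex.exp_ne_zero _
  have hv0 : v ≠ 0 := Complex.exp_ne_zero _
  have huv : u - v ≠ 0 := sub_ne_zero.2 h
  have hnu : Complex.exp (-θ * Complex.I) = u⁻¹ := by
    rw [hu, ← Complex.exp_neg]; ring_nf
  have hnv : Complex.exp (-φ * Complex.I) = v⁻¹ := by
    rw [hv, ← Complex.exp_neg]; ring_nf
  have hinv : u⁻¹ - v⁻¹ ≠ 0 := by
    intro hc
    apply huv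
    have h2 : u⁻¹ = v⁻¹ := by linear_combination hc
    rw [inv_eq_iff_eq_inv, inv_inv] at h2
    rw [h2]; ring
  have hvu : v - u ≠ 0 := fun hc => huv (by linear_combination -hc)
  rw [hnu, hnv]
  field_simp
  ring



/-- The cotangent identity
`Σ_{k=1}^{n−2} cot((φ_k−θ)/2) + (1/2) cot((φ_{n−1}−θ)/2) + (1/2) cot((φ_n−θ)/2)
  = −i (1 − Σ_{k=1}^{n} e^{−iθ}/(e^{−iθ} − e^{−iφ_k})
        + Σ_{k=1}^{n−2} e^{iθ}/(e^{iθ} − e^{iφ_k}))`;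
in particular the right-hand side is real. -/
theorem S_function_identity (n : ℕ) (hn : 2 ≤ n) (φ : ℕ → ℝ) (θ : ℝ)
    (hne : ∀ k ∈ Finset.Icc 1 n,
      Complex.exp (θ * Complex.I) ≠ Complex.exp (φ k * Complex.I)) :
    (↑((∑ k ∈ Finset.Icc 1 (n - 2), Real.cot ((φ k - θ) / 2)) +
        (1 / 2) * Real.cot ((φ (n - 1) - θ) / 2) +
        (1 / 2) * Real.cot ((φ n - θ) / 2)) : ℂ) =
      -Complex.I * (1 -
        (∑ k ∈ Finset.Icc 1 n,
          Complex.exp (-θ * Complex.I) /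
            (Complex.exp (-θ * Complex.I) - Complex.exp (-φ k * Complex.I))) +
        ∑ k ∈ Finset.Icc 1 (n - 2),
          Complex.exp (θ * Complex.I) /
            (Complex.exp (θ * Complex.I) - Complex.exp (φ k * Complex.I))) := by
  obtain ⟨m, rfl⟩ : ∃ m, n = m + 2 := ⟨n - 2, by omega⟩
  simp only [show m + 2 - 2 = m from rfl, show m + 2 - 1 = m + 1 from rfl]
  set A : ℕ → ℂ := fun k => Complex.exp (-θ * Complex.I) /
      (Complex.exp (-θ * Complex.I) - Complex.exp (-φ k * Complex.I)) with hA
  set B : ℕ → ℂ := fun k => Complex.exp (θ * Complex.I) /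
      (Complex.exp (θ * Complex.I) - Complex.exp (φ k * Complex.I)) with hB
  have hsplit : ∑ k ∈ Finset.Icc 1 (m + 2), A k
      = (∑ k ∈ Finset.Icc 1 m, A k) + A (m + 1) + A (m + 2) := by
    rw [Finset.sum_Icc_succ_top (by omega), Finset.sum_Icc_succ_top (by omega)]
  have hmem : ∀ k, k ∈ Finset.Icc 1 m → k ∈ Finset.Icc 1 (m + 2) := by
    intro k hk
    simp only [Finset.mem_Icc] at *
    omega
  have hcot : ∀ k ∈ Finset.Icc 1 m,
      ((Real.cot ((φ k - θ) / 2) : ℝ) : ℂ) = -Complex.I * (B k - A k) :=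
    fun k hk => cot_key θ (φ k) (hne k (hmem k hk))
  have hAB1 : A (m + 1) + B (m + 1) = 1 :=
    AB_sum θ (φ (m + 1)) (hne (m + 1) (Finset.mem_Icc.2 (by omega)))
  have hAB2 : A (m + 2) + B (m + 2) = 1 :=
    AB_sum θ (φ (m + 2)) (hne (m + 2) (Finset.mem_Icc.2 (by omega)))
  have hc1 : ((Real.cot ((φ (m + 1) - θ) / 2) : ℝ) : ℂ) = -Complex.I * (B (m + 1) - A (m + 1)) :=
    cot_key θ (φ (m + 1)) (hne (m + 1) (Finset.mem_Icc.2 (by omega)))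
  have hc2 : ((Real.cot ((φ (m + 2) - θ) / 2) : ℝ) : ℂ) = -Complex.I * (B (m + 2) - A (m + 2)) :=
    cot_key θ (φ (m + 2)) (hne (m + 2) (Finset.mem_Icc.2 (by omega)))
  rw [Complex.ofReal_add, Complex.ofReal_add, Complex.ofReal_mul, Complex.ofReal_mul,
    Complex.ofReal_sum]
  rw [Finset.sum_congr rfl hcot, hc1, hc2, hsplit, ← Finset.mul_sum, Finset.sum_sub_distrib]
  push_cast
  linear_combination (-Complex.I / 2) * hAB1 + (-Complex.I / 2) * hAB2
end

section
/- (Theorem, discrete measure, monotonicity.) Under the stated discrete paraorthogonality setup with fixed zero e^{iθ₀}, if at some t ∈ I one has W_j(t) ≥ 0 for all j = 0,…,N and W_j(t) > 0 for at least one j, then φ_n′(t) > 0; that is, the zero ζ(t) = e^{iφ_n(t)} moves strictly counterclockwise along the unit circle as t increases. -/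
open Complex Real

lemma expI_real (x : ℝ) : Complex.exp (x * Complex.I) = (Real.cos x : ℂ) + (Real.sin x : ℂ) * Complex.I := by
  rw [Complex.exp_mul_I, Complex.ofReal_cos, Complex.ofReal_sin]

lemma expI_sub (α β : ℝ) : Complex.exp (α * Complex.I) - Complex.exp (β * Complex.I) =
    2 * Complex.I * (Real.sin ((α - β)/2) : ℝ) * Complex.exp ((((α + β)/2 : ℝ)) * Complex.I) := by
  have h1 : (α : ℂ) * Complex.I = (((α+β)/2 : ℝ)) * Complex.I + (((α-β)/2 : ℝ)) * Complex.I := by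
    push_cast; ring
  have h2 : (β : ℂ) * Complex.I = (((α+β)/2 : ℝ)) * Complex.I + ((-((α-β)/2) : ℝ)) * Complex.I := by
    push_cast; ring
  rw [h1, h2, Complex.exp_add, Complex.exp_add, expI_real ((α-β)/2), expI_real (-((α-β)/2)),
    Real.cos_neg, Real.sin_neg]
  push_cast
  ring

lemma sin_ne_of_exp_ne {α β : ℝ} (h : Complex.exp (α * Complex.I) ≠ Complex.exp (β * Complex.I)) :
    Real.sin ((α - β)/2) ≠ 0 := by
  intro h0
  apply h
  have := expI_sub α β
  rw [h0] at this
  simpa [sub_eq_zero] using this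

lemma exp_eq_of_sin_eq {α β : ℝ} (h : Real.sin ((α - β)/2) = 0) :
    Complex.exp (α * Complex.I) = Complex.exp (β * Complex.I) := by
  have := expI_sub α β
  rw [h] at this
  simpa [sub_eq_zero] using this

lemma expI_mul_expI (x y : ℝ) : Complex.exp (x * Complex.I) * Complex.exp (y * Complex.I)
    = Complex.exp (((x + y : ℝ)) * Complex.I) := by
  rw [← Complex.exp_add]; push_cast; ring_nf

lemma conj_expI (α : ℝ) : (starRingEnd ℂ) (Complex.exp (α * Complex.I))
    = Complex.exp ((-α : ℝ) * Complex.I) := by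
  rw [← Complex.exp_conj]; push_cast; simp

lemma pair_mul (α β : ℝ) :
    (Complex.exp (α * Complex.I) - Complex.exp (β * Complex.I)) *
      (Complex.exp ((-α : ℝ) * Complex.I) - Complex.exp ((-β : ℝ) * Complex.I))
    = ((4 * Real.sin ((α - β)/2) ^ 2 : ℝ) : ℂ) := by
  rw [expI_sub α β, expI_sub (-α) (-β)]
  have h1 : (-α - -β)/2 = -((α - β)/2) := by ring
  rw [h1, Real.sin_neg]
  have hE : Complex.exp ((((α + β)/2 : ℝ)) * Complex.I) *
      Complex.exp ((((-α - β)/2 : ℝ)) * Complex.I) = 1 := by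
    rw [expI_mul_expI]
    have h2 : ((α + β)/2 + (-α - β)/2 : ℝ) = 0 := by ring
    rw [h2]; simp
  have hI : Complex.I * Complex.I = -1 := Complex.I_mul_I
  simp only [Complex.ofReal_neg, Complex.ofReal_mul, Complex.ofReal_pow, Complex.ofReal_ofNat]
  linear_combination (-4 * Complex.I^2 * (Real.sin ((α - β)/2) : ℂ)^2) * hE +
    (-4 * (Real.sin ((α - β)/2) : ℂ)^2) * hI

lemma triple_mul (w c1 c2 : ℝ) :
    (Complex.exp (w * Complex.I) - Complex.exp (c1 * Complex.I)) *
      (Complex.exp (w * Complex.I) - Complex.exp (c2 * Complex.I)) *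
      Complex.exp ((-w : ℝ) * Complex.I)
    = ((-4 * (Real.sin ((w - c1)/2) * Real.sin ((w - c2)/2)) : ℝ) : ℂ) *
        Complex.exp ((((c1 + c2)/2 : ℝ)) * Complex.I) := by
  rw [expI_sub w c1, expI_sub w c2]
  have hE : Complex.exp ((((w + c1)/2 : ℝ)) * Complex.I) *
      Complex.exp ((((w + c2)/2 : ℝ)) * Complex.I) * Complex.exp ((-w : ℝ) * Complex.I)
      = Complex.exp ((((c1 + c2)/2 : ℝ)) * Complex.I) := by
    rw [expI_mul_expI, expI_mul_expI]
    congr 2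
    push_cast; ring
  have hI : Complex.I * Complex.I = -1 := Complex.I_mul_I
  simp only [Complex.ofReal_neg] at hE
  simp only [Complex.ofReal_mul, Complex.ofReal_neg, Complex.ofReal_ofNat]
  linear_combination (4 * Complex.I^2 * (Real.sin ((w - c1)/2) : ℂ) * (Real.sin ((w - c2)/2) : ℂ)) * hE +
    (4 * (Real.sin ((w - c1)/2) : ℂ) * (Real.sin ((w - c2)/2) : ℂ) *
      Complex.exp ((((c1 + c2)/2 : ℝ)) * Complex.I)) * hI

lemma quad_mul (w c1 c2 c3 : ℝ) :
    (Complex.exp (w * Complex.I) - Complex.exp (c1 * Complex.I)) *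
      (Complex.exp (w * Complex.I) - Complex.exp (c2 * Complex.I)) *
      (Complex.exp (w * Complex.I) - Complex.exp (c3 * Complex.I)) *
      Complex.exp ((-w : ℝ) * Complex.I)
    = ((-8 * (Real.sin ((w - c1)/2) * Real.sin ((w - c2)/2) * Real.sin ((w - c3)/2)) : ℝ) : ℂ) *
        Complex.I * Complex.exp ((((w + c1 + c2 + c3)/2 : ℝ)) * Complex.I) := by
  rw [expI_sub w c1, expI_sub w c2, expI_sub w c3]
  have hE : Complex.exp ((((w + c1)/2 : ℝ)) * Complex.I) *
      Complex.exp ((((w + c2)/2 : ℝ)) * Complex.I) *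
      Complex.exp ((((w + c3)/2 : ℝ)) * Complex.I) *
      Complex.exp ((-w : ℝ) * Complex.I)
      = Complex.exp ((((w + c1 + c2 + c3)/2 : ℝ)) * Complex.I) := by
    rw [expI_mul_expI, expI_mul_expI, expI_mul_expI]
    congr 2
    push_cast; ring
  have hI : Complex.I * Complex.I = -1 := Complex.I_mul_I
  simp only [Complex.ofReal_neg] at hE
  simp only [Complex.ofReal_mul, Complex.ofReal_neg, Complex.ofReal_ofNat]
  linear_combination
    (8 * (Real.sin ((w - c1)/2) : ℂ) * (Real.sin ((w - c2)/2) : ℂ) * (Real.sin ((w - c3)/2) : ℂ) *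
      (Complex.exp ((((w + c1)/2 : ℝ)) * Complex.I) *
      Complex.exp ((((w + c2)/2 : ℝ)) * Complex.I) *
      Complex.exp ((((w + c3)/2 : ℝ)) * Complex.I) *
      Complex.exp (-(w : ℂ) * Complex.I)) * Complex.I) * hI +
    (-8 * Complex.I * (Real.sin ((w - c1)/2) : ℂ) * (Real.sin ((w - c2)/2) : ℂ) * (Real.sin ((w - c3)/2) : ℂ)) * hE

lemma cos_lt_one_of_sin_half_ne {x : ℝ} (h : Real.sin (x/2) ≠ 0) : Real.cos x < 1 := by
  have h1 : Real.sin (x/2) ^ 2 = 1/2 - Real.cos (2 * (x/2)) / 2 := Real.sin_sq_eq_half_sub _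
  rw [show 2 * (x/2) = x by ring] at h1
  have h2 : 0 < Real.sin (x/2) ^ 2 := by positivity
  nlinarith

lemma strict_triangle (M : ℕ) (g θ : ℕ → ℝ) (hg : ∀ j ∈ Finset.range M, 0 < g j)
    (j₀ l₀ : ℕ) (hj₀ : j₀ ∈ Finset.range M) (hl₀ : l₀ ∈ Finset.range M)
    (hne : Real.cos (θ j₀ - θ l₀) < 1) :
    (∑ j ∈ Finset.range M, g j * Real.cos (θ j))^2 +
      (∑ j ∈ Finset.range M, g j * Real.sin (θ j))^2 < (∑ j ∈ Finset.range M, g j)^2 := by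
  have hL : (∑ j ∈ Finset.range M, g j * Real.cos (θ j))^2 +
      (∑ j ∈ Finset.range M, g j * Real.sin (θ j))^2
      = ∑ p ∈ Finset.range M ×ˢ Finset.range M, g p.1 * g p.2 * Real.cos (θ p.1 - θ p.2) := by
    rw [Finset.sum_product]
    rw [sq, sq, Finset.sum_mul_sum, Finset.sum_mul_sum, ← Finset.sum_add_distrib]
    refine Finset.sum_congr rfl fun i _ => ?_
    rw [← Finset.sum_add_distrib]
    refine Finset.sum_congr rfl fun j _ => ?_
    rw [Real.cos_sub]; ring
  have hR : (∑ j ∈ Finset.range M, g j)^2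
      = ∑ p ∈ Finset.range M ×ˢ Finset.range M, g p.1 * g p.2 := by
    rw [Finset.sum_product, sq, Finset.sum_mul_sum]
  rw [hL, hR]
  refine Finset.sum_lt_sum (fun p hp => ?_) ⟨(j₀, l₀), Finset.mk_mem_product hj₀ hl₀, ?_⟩
  · rw [Finset.mem_product] at hp
    have h1 := hg p.1 hp.1
    have h2 := hg p.2 hp.2
    nlinarith [Real.cos_le_one (θ p.1 - θ p.2), mul_pos h1 h2]
  · have h1 := hg j₀ hj₀
    have h2 := hg l₀ hl₀
    simp only
    nlinarith [mul_pos h1 h2]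

lemma term_transform (F : Finset ℕ) (w t0 fn : ℝ) (φv : ℕ → ℝ) :
    (∏ k ∈ F, (Complex.exp (w * Complex.I) - Complex.exp (φv k * Complex.I))) *
      ((Complex.exp (w * Complex.I) - Complex.exp (t0 * Complex.I)) *
       (Complex.exp (w * Complex.I) - Complex.exp (fn * Complex.I))) *
      (Complex.exp ((-w : ℝ) * Complex.I) *
        ∏ k ∈ F, (Complex.exp ((-w : ℝ) * Complex.I) - Complex.exp ((-(φv k) : ℝ) * Complex.I)))
    = (((∏ k ∈ F, (4 * Real.sin ((w - φv k)/2)^2)) *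
        (-4 * (Real.sin ((w - t0)/2) * Real.sin ((w - fn)/2))) : ℝ) : ℂ) *
        Complex.exp ((((t0 + fn)/2 : ℝ)) * Complex.I) := by
  have h1 : (∏ k ∈ F, (Complex.exp (w * Complex.I) - Complex.exp (φv k * Complex.I))) *
      ((Complex.exp (w * Complex.I) - Complex.exp (t0 * Complex.I)) *
       (Complex.exp (w * Complex.I) - Complex.exp (fn * Complex.I))) *
      (Complex.exp ((-w : ℝ) * Complex.I) *
        ∏ k ∈ F, (Complex.exp ((-w : ℝ) * Complex.I) - Complex.exp ((-(φv k) : ℝ) * Complex.I)))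
      = ((∏ k ∈ F, (Complex.exp (w * Complex.I) - Complex.exp (φv k * Complex.I))) *
         ∏ k ∈ F, (Complex.exp ((-w : ℝ) * Complex.I) - Complex.exp ((-(φv k) : ℝ) * Complex.I))) *
        ((Complex.exp (w * Complex.I) - Complex.exp (t0 * Complex.I)) *
         (Complex.exp (w * Complex.I) - Complex.exp (fn * Complex.I)) *
         Complex.exp ((-w : ℝ) * Complex.I)) := by ring
  rw [h1, ← Finset.prod_mul_distrib, triple_mul w t0 fn]
  have h2 : ∀ k ∈ F, (Complex.exp (w * Complex.I) - Complex.exp (φv k * Complex.I)) *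
      (Complex.exp ((-w : ℝ) * Complex.I) - Complex.exp ((-(φv k) : ℝ) * Complex.I))
      = ((4 * Real.sin ((w - φv k)/2)^2 : ℝ) : ℂ) := fun k _ => pair_mul w (φv k)
  rw [Finset.prod_congr rfl h2, ← Complex.ofReal_prod]
  push_cast
  ring

lemma term_transform2 (F : Finset ℕ) (w c t0 fn : ℝ) (φv : ℕ → ℝ) :
    (∏ k ∈ F, (Complex.exp (w * Complex.I) - Complex.exp (φv k * Complex.I))) *
      ((Complex.exp (w * Complex.I) - Complex.exp (c * Complex.I)) *
       ((Complex.exp (w * Complex.I) - Complex.exp (t0 * Complex.I)) *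
        (Complex.exp (w * Complex.I) - Complex.exp (fn * Complex.I)))) *
      (Complex.exp ((-w : ℝ) * Complex.I) *
        ∏ k ∈ F, (Complex.exp ((-w : ℝ) * Complex.I) - Complex.exp ((-(φv k) : ℝ) * Complex.I)))
    = (((∏ k ∈ F, (4 * Real.sin ((w - φv k)/2)^2)) *
        (-8 * (Real.sin ((w - c)/2) * (Real.sin ((w - t0)/2) * Real.sin ((w - fn)/2)))) : ℝ) : ℂ) *
        (Complex.I * Complex.exp ((((w + c + t0 + fn)/2 : ℝ)) * Complex.I)) := by
  have h1 : (∏ k ∈ F, (Complex.exp (w * Complex.I) - Complex.exp (φv k * Complex.I))) *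
      ((Complex.exp (w * Complex.I) - Complex.exp (c * Complex.I)) *
       ((Complex.exp (w * Complex.I) - Complex.exp (t0 * Complex.I)) *
        (Complex.exp (w * Complex.I) - Complex.exp (fn * Complex.I)))) *
      (Complex.exp ((-w : ℝ) * Complex.I) *
        ∏ k ∈ F, (Complex.exp ((-w : ℝ) * Complex.I) - Complex.exp ((-(φv k) : ℝ) * Complex.I)))
      = ((∏ k ∈ F, (Complex.exp (w * Complex.I) - Complex.exp (φv k * Complex.I))) *
         ∏ k ∈ F, (Complex.exp ((-w : ℝ) * Complex.I) - Complex.exp ((-(φv k) : ℝ) * Complex.I))) *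
        ((Complex.exp (w * Complex.I) - Complex.exp (c * Complex.I)) *
         (Complex.exp (w * Complex.I) - Complex.exp (t0 * Complex.I)) *
         (Complex.exp (w * Complex.I) - Complex.exp (fn * Complex.I)) *
         Complex.exp ((-w : ℝ) * Complex.I)) := by ring
  rw [h1, ← Finset.prod_mul_distrib, quad_mul w c t0 fn]
  have h2 : ∀ k ∈ F, (Complex.exp (w * Complex.I) - Complex.exp (φv k * Complex.I)) *
      (Complex.exp ((-w : ℝ) * Complex.I) - Complex.exp ((-(φv k) : ℝ) * Complex.I))
      = ((4 * Real.sin ((w - φv k)/2)^2 : ℝ) : ℂ) := fun k _ => pair_mul w (φv k)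
  rw [Finset.prod_congr rfl h2, ← Complex.ofReal_prod]
  push_cast
  ring

noncomputable def auxPi (ω φ : ℕ → ℝ → ℝ) (m j : ℕ) (τ : ℝ) : ℝ :=
  ∏ k ∈ Finset.Icc 1 m, (4 * Real.sin ((ω j τ - φ k τ)/2)^2)

noncomputable def auxSg (ω φ : ℕ → ℝ → ℝ) (m : ℕ) (θ₀ : ℝ) (j : ℕ) (τ : ℝ) : ℝ :=
  Real.sin ((ω j τ - φ (m+2) τ)/2) * Real.sin ((ω j τ - θ₀)/2)

open Polynomial in
lemma paraG_zero (m N : ℕ) (θ₀ τ : ℝ) (γ ω φ : ℕ → ℝ → ℝ) (P : ℂ → ℝ → ℂ)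
    (hP : ∀ z t, P z t = ∏ k ∈ Finset.Icc 1 (m+2), (z - Complex.exp (φ k t * Complex.I)))
    (hfixτ : φ (m+1) τ = θ₀)
    (hparaτ : ∀ g : Polynomial ℂ, g.natDegree ≤ m+1 → g.eval 0 = 0 →
      ∑ j ∈ Finset.range (N + 1), (γ j τ : ℂ) *
        P (Complex.exp (ω j τ * Complex.I)) τ *
        (starRingEnd ℂ) (g.eval (Complex.exp (ω j τ * Complex.I))) = 0) :
    ∑ j ∈ Finset.range (N+1), γ j τ * auxPi ω φ m j τ * auxSg ω φ m θ₀ j τ = 0 := by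
  set g₀ : Polynomial ℂ :=
    X * ∏ k ∈ Finset.Icc 1 m, (X - C (Complex.exp (φ k τ * Complex.I))) with hg
  have hdeg : g₀.natDegree ≤ m + 1 := by
    refine le_trans (Polynomial.natDegree_mul_le) ?_
    have h2 : (∏ k ∈ Finset.Icc 1 m, (X - C (Complex.exp (φ k τ * Complex.I)))).natDegree ≤ m := by
      refine le_trans (Polynomial.natDegree_prod_le _ _) ?_
      simp [Polynomial.natDegree_X_sub_C]
    simp only [Polynomial.natDegree_X]
    omega
  have h0 : g₀.eval 0 = 0 := by simp [hg]
  have h := hparaτ g₀ hdeg h0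
  have hterm : ∀ j ∈ Finset.range (N+1), (γ j τ : ℂ) *
      P (Complex.exp (ω j τ * Complex.I)) τ *
      (starRingEnd ℂ) (g₀.eval (Complex.exp (ω j τ * Complex.I)))
      = ((γ j τ * auxPi ω φ m j τ * auxSg ω φ m θ₀ j τ : ℝ) : ℂ) *
        ((-4 : ℂ) * Complex.exp ((((θ₀ + φ (m+2) τ)/2 : ℝ)) * Complex.I)) := by
    intro j hj
    rw [hP]
    rw [Finset.prod_Icc_succ_top (by omega : 1 ≤ m + 2) , Finset.prod_Icc_succ_top
      (by omega : 1 ≤ m + 1)]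
    simp only [hg, Polynomial.eval_mul, Polynomial.eval_X, Polynomial.eval_prod,
      Polynomial.eval_sub, Polynomial.eval_C, map_mul, map_prod, map_sub, conj_expI, hfixτ]
    have htt := term_transform (Finset.Icc 1 m) (ω j τ) θ₀ (φ (m+2) τ) (fun k => φ k τ)
    simp only [auxPi, auxSg]
    push_cast at htt ⊢
    linear_combination (γ j τ : ℂ) * htt
  rw [Finset.sum_congr rfl hterm, ← Finset.sum_mul, ← Complex.ofReal_sum] at h
  have hK : ((-4 : ℂ) * Complex.exp ((((θ₀ + φ (m+2) τ)/2 : ℝ)) * Complex.I)) ≠ 0 :=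
    mul_ne_zero (by norm_num) (Complex.exp_ne_zero _)
  exact_mod_cast (mul_eq_zero.mp h).resolve_right hK

lemma re_ofReal_mul_expI (r x : ℝ) : ((r : ℂ) * Complex.exp (x * Complex.I)).re = r * Real.cos x := by
  rw [Complex.re_ofReal_mul, Complex.exp_ofReal_mul_I_re]

open Polynomial in
lemma paraT_zero (m N : ℕ) (θ₀ τ : ℝ) (γ ω φ : ℕ → ℝ → ℝ) (P : ℂ → ℝ → ℂ)
    (hP : ∀ z t, P z t = ∏ k ∈ Finset.Icc 1 (m+2), (z - Complex.exp (φ k t * Complex.I)))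
    (hfixτ : φ (m+1) τ = θ₀)
    (hparaτ : ∀ g : Polynomial ℂ, g.natDegree ≤ m+1 → g.eval 0 = 0 →
      ∑ j ∈ Finset.range (N + 1), (γ j τ : ℂ) *
        P (Complex.exp (ω j τ * Complex.I)) τ *
        (starRingEnd ℂ) (g.eval (Complex.exp (ω j τ * Complex.I))) = 0)
    (k : ℕ) (hk : k ∈ Finset.Icc 1 m) :
    ∑ j ∈ Finset.range (N+1), γ j τ *
      (∏ k' ∈ (Finset.Icc 1 m).erase k, (4 * Real.sin ((ω j τ - φ k' τ)/2)^2)) *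
      (Real.sin ((ω j τ - φ k τ)/2) * Real.cos ((ω j τ - φ k τ)/2)) * auxSg ω φ m θ₀ j τ = 0 := by
  set gk : Polynomial ℂ :=
    X * ∏ k' ∈ (Finset.Icc 1 m).erase k, (X - C (Complex.exp (φ k' τ * Complex.I))) with hg
  have hdeg : gk.natDegree ≤ m + 1 := by
    refine le_trans (Polynomial.natDegree_mul_le) ?_
    have h2 : (∏ k' ∈ (Finset.Icc 1 m).erase k,
        (X - C (Complex.exp (φ k' τ * Complex.I)))).natDegree ≤ m := by
      refine le_trans (Polynomial.natDegree_prod_le _ _) ?_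
      have : ∑ k' ∈ (Finset.Icc 1 m).erase k,
          (X - C (Complex.exp (φ k' τ * Complex.I))).natDegree
          = ∑ k' ∈ (Finset.Icc 1 m).erase k, 1 := by
        refine Finset.sum_congr rfl fun k' _ => Polynomial.natDegree_X_sub_C _
      rw [this, Finset.sum_const, smul_eq_mul, mul_one]
      calc ((Finset.Icc 1 m).erase k).card ≤ (Finset.Icc 1 m).card := Finset.card_erase_le
        _ = m := by simp
    simp only [Polynomial.natDegree_X]
    omega
  have h0 : gk.eval 0 = 0 := by simp [hg]
  have h := hparaτ gk hdeg h0
  set KI : ℂ := Complex.I * Complex.exp ((((2 * φ k τ + θ₀ + φ (m+2) τ)/2 : ℝ)) * Complex.I)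
    with hKI
  have hterm : ∀ j ∈ Finset.range (N+1), (γ j τ : ℂ) *
      P (Complex.exp (ω j τ * Complex.I)) τ *
      (starRingEnd ℂ) (gk.eval (Complex.exp (ω j τ * Complex.I)))
      = (((γ j τ * (∏ k' ∈ (Finset.Icc 1 m).erase k, (4 * Real.sin ((ω j τ - φ k' τ)/2)^2)) *
          (-8 * (Real.sin ((ω j τ - φ k τ)/2) * auxSg ω φ m θ₀ j τ))) : ℝ) : ℂ) *
        Complex.exp ((((ω j τ - φ k τ)/2 : ℝ)) * Complex.I) * KI := by
    intro j hj
    rw [hP]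
    rw [Finset.prod_Icc_succ_top (by omega : 1 ≤ m + 2), Finset.prod_Icc_succ_top
      (by omega : 1 ≤ m + 1), ← Finset.mul_prod_erase _ _ hk]
    simp only [hg, Polynomial.eval_mul, Polynomial.eval_X, Polynomial.eval_prod,
      Polynomial.eval_sub, Polynomial.eval_C, map_mul, map_prod, map_sub, conj_expI, hfixτ]
    have htt := term_transform2 ((Finset.Icc 1 m).erase k) (ω j τ) (φ k τ) θ₀ (φ (m+2) τ)
      (fun k => φ k τ)
    have hsplit : Complex.exp ((((ω j τ + φ k τ + θ₀ + φ (m+2) τ)/2 : ℝ)) * Complex.I)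
        = Complex.exp ((((ω j τ - φ k τ)/2 : ℝ)) * Complex.I) *
          Complex.exp ((((2 * φ k τ + θ₀ + φ (m+2) τ)/2 : ℝ)) * Complex.I) := by
      rw [expI_mul_expI]
      congr 2
      push_cast; ring
    rw [hsplit] at htt
    simp only [hKI, auxSg]
    push_cast at htt ⊢
    linear_combination (γ j τ : ℂ) * htt
  rw [Finset.sum_congr rfl hterm] at h
  have h2 : (∑ j ∈ Finset.range (N+1),
      (((γ j τ * (∏ k' ∈ (Finset.Icc 1 m).erase k, (4 * Real.sin ((ω j τ - φ k' τ)/2)^2)) *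
        (-8 * (Real.sin ((ω j τ - φ k τ)/2) * auxSg ω φ m θ₀ j τ))) : ℝ) : ℂ) *
      Complex.exp ((((ω j τ - φ k τ)/2 : ℝ)) * Complex.I)) * KI = 0 := by
    rw [Finset.sum_mul]; exact h
  have hKIne : KI ≠ 0 := mul_ne_zero Complex.I_ne_zero (Complex.exp_ne_zero _)
  have h3 := (mul_eq_zero.mp h2).resolve_right hKIne
  have h4 := congrArg Complex.re h3
  rw [Complex.re_sum] at h4
  simp only [re_ofReal_mul_expI, Complex.zero_re] at h4
  have h5 : ∑ j ∈ Finset.range (N+1), γ j τ *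
      (∏ k' ∈ (Finset.Icc 1 m).erase k, (4 * Real.sin ((ω j τ - φ k' τ)/2)^2)) *
      (Real.sin ((ω j τ - φ k τ)/2) * Real.cos ((ω j τ - φ k τ)/2)) * auxSg ω φ m θ₀ j τ
      = (-1/8) * ∑ j ∈ Finset.range (N+1),
        (γ j τ * (∏ k' ∈ (Finset.Icc 1 m).erase k, (4 * Real.sin ((ω j τ - φ k' τ)/2)^2)) *
        (-8 * (Real.sin ((ω j τ - φ k τ)/2) * auxSg ω φ m θ₀ j τ))) *
        Real.cos ((ω j τ - φ k τ)/2) := by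
    rw [Finset.mul_sum]
    refine Finset.sum_congr rfl fun j _ => by ring
  rw [h5, h4, mul_zero]

lemma sin_mul_sin (A B : ℝ) : Real.sin A * Real.sin B = (Real.cos (A - B) - Real.cos (A + B))/2 := by
  rw [Real.cos_sub, Real.cos_add]; ring

lemma cos_mul_sin (A B : ℝ) : Real.cos A * Real.sin B = (Real.sin (A + B) - Real.sin (A - B))/2 := by
  rw [Real.sin_add, Real.sin_sub]; ring

lemma Msign_abstract (N : ℕ) (g w : ℕ → ℝ) (fn θ₀ : ℝ)
    (hg : ∀ j ∈ Finset.range (N+1), 0 < g j)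
    (hsep1 : ∀ j ∈ Finset.range (N+1), Real.sin ((w j - fn)/2) ≠ 0)
    (hsep2 : ∀ j ∈ Finset.range (N+1), Real.sin ((w j - θ₀)/2) ≠ 0)
    (hδ : Real.sin ((fn - θ₀)/2) ≠ 0)
    (hE0 : ∑ j ∈ Finset.range (N+1), g j * (Real.sin ((w j - fn)/2) * Real.sin ((w j - θ₀)/2)) = 0) :
    0 < Real.sin ((fn - θ₀)/2) *
      ∑ j ∈ Finset.range (N+1), g j * (Real.cos ((w j - fn)/2) * Real.sin ((w j - θ₀)/2)) := by
  set δ : ℝ := (fn - θ₀)/2 with hδdef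
  set μ : ℝ := (fn + θ₀)/2 with hμdef
  set Γ : ℝ := ∑ j ∈ Finset.range (N+1), g j with hΓ
  set X : ℝ := ∑ j ∈ Finset.range (N+1), g j * Real.cos (w j - μ) with hX
  set Y : ℝ := ∑ j ∈ Finset.range (N+1), g j * Real.sin (w j - μ) with hY
  have hΓpos : 0 < Γ := Finset.sum_pos hg ⟨0, by simp⟩
  -- rewrite hE0
  have hE0' : (Real.cos δ * Γ - X) / 2 = 0 := by
    rw [← hE0]
    rw [hΓ, hX, Finset.mul_sum, ← Finset.sum_sub_distrib, Finset.sum_div]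
    refine Finset.sum_congr rfl fun j _ => ?_
    rw [sin_mul_sin]
    have e1 : (w j - fn)/2 - (w j - θ₀)/2 = -δ := by rw [hδdef]; ring
    have e2 : (w j - fn)/2 + (w j - θ₀)/2 = w j - μ := by rw [hμdef]; ring
    rw [e1, e2, Real.cos_neg]
    ring
  have hXeq : X = Real.cos δ * Γ := by linarith
  -- rewrite goal sum
  have hM : (∑ j ∈ Finset.range (N+1), g j * (Real.cos ((w j - fn)/2) * Real.sin ((w j - θ₀)/2)))
      = (Y + Real.sin δ * Γ) / 2 := by
    rw [hΓ, hY, Finset.mul_sum, ← Finset.sum_add_distrib, Finset.sum_div]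
    refine Finset.sum_congr rfl fun j _ => ?_
    rw [cos_mul_sin]
    have e1 : (w j - fn)/2 - (w j - θ₀)/2 = -δ := by rw [hδdef]; ring
    have e2 : (w j - fn)/2 + (w j - θ₀)/2 = w j - μ := by rw [hμdef]; ring
    rw [e1, e2, Real.sin_neg]
    ring
  rw [hM]
  by_cases hcase : ∃ j ∈ Finset.range (N+1), ∃ l ∈ Finset.range (N+1),
      Real.cos ((w j - μ) - (w l - μ)) < 1
  · obtain ⟨j₀, hj₀, l₀, hl₀, hlt⟩ := hcase
    have hstrict := strict_triangle (N+1) g (fun j => w j - μ) hg j₀ l₀ hj₀ hl₀ hlt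
    rw [← hX, ← hY, ← hΓ, hXeq] at hstrict
    have hY2 : Y^2 < Γ^2 * Real.sin δ ^ 2 := by
      nlinarith [Real.sin_sq_add_cos_sq δ]
    nlinarith [sq_nonneg (Real.sin δ * Γ + Y), hΓpos, hY2]
  · exfalso
    push_neg at hcase
    -- all mass points coincide on the circle
    have hsg : ∀ j ∈ Finset.range (N+1),
        Real.sin ((w j - fn)/2) * Real.sin ((w j - θ₀)/2)
        = Real.sin ((w 0 - fn)/2) * Real.sin ((w 0 - θ₀)/2) := by
      intro j hj
      have h1 : Real.cos ((w j - μ) - (w 0 - μ)) = 1 :=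
        le_antisymm (Real.cos_le_one _) (hcase j hj 0 (by simp))
      have h1' : Real.cos (w j - w 0) = 1 := by
        rw [show w j - w 0 = (w j - μ) - (w 0 - μ) by ring]; exact h1
      obtain ⟨nn, hnn⟩ := (Real.cos_eq_one_iff _).mp h1'
      have hw : w j = w 0 + nn * (2 * Real.pi) := by linarith
      have hs : ∀ c : ℝ, Real.sin ((w j - c)/2) = (-1 : ℝ)^nn * Real.sin ((w 0 - c)/2) := by
        intro c
        rw [hw, show (w 0 + nn * (2 * Real.pi) - c)/2 = (w 0 - c)/2 + nn * Real.pi by ring]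
        exact Real.sin_add_int_mul_pi _ _
      rw [hs fn, hs θ₀]
      have hone : ((-1 : ℝ)^nn) * ((-1 : ℝ)^nn) = 1 := by
        rw [← zpow_add₀ (by norm_num : (-1 : ℝ) ≠ 0), show nn + nn = 2 * nn by ring, zpow_mul]
        norm_num
      calc (-1 : ℝ)^nn * Real.sin ((w 0 - fn)/2) * ((-1 : ℝ)^nn * Real.sin ((w 0 - θ₀)/2))
          = ((-1 : ℝ)^nn * (-1 : ℝ)^nn) * (Real.sin ((w 0 - fn)/2) * Real.sin ((w 0 - θ₀)/2)) := by
            ring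
        _ = _ := by rw [hone, one_mul]
    rw [Finset.sum_congr rfl (fun j hj => by rw [hsg j hj])] at hE0
    rw [← Finset.sum_mul] at hE0
    have : Real.sin ((w 0 - fn)/2) * Real.sin ((w 0 - θ₀)/2) = 0 := by
      rcases mul_eq_zero.mp hE0 with h | h
      · exact absurd h (ne_of_gt hΓpos)
      · exact h
    rcases mul_eq_zero.mp this with h | h
    · exact hsep1 0 (by simp) h
    · exact hsep2 0 (by simp) h

lemma perj_identity (m : ℕ) (φd sk ck ek : ℕ → ℝ)
    (hsk : ∀ k ∈ Finset.Icc 1 m, sk k ≠ 0)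
    (Pi : ℝ) (hPi : ∀ k ∈ Finset.Icc 1 m, Pi = ek k * (4 * sk k ^ 2))
    (g g' w' fn' sδ sn cn sθ cθ : ℝ)
    (hsn : sn ≠ 0) (hsθ : sθ ≠ 0) (hsδ : sδ ≠ 0) :
    (g' * Pi + g * (∑ k ∈ Finset.Icc 1 m, ek k * (4 * sk k * ck k * (w' - φd k)))) * (sn * sθ)
      + (g * Pi) * (cn * ((w' - fn')/2) * sθ + sn * (cθ * (w'/2)))
    = (2/sδ) * (Pi * (sn * sθ)^2 *
        ((sδ / (2 * (sn * sθ))) * g' -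
          g * (sδ / (2 * (sn * sθ))) *
            ((∑ k ∈ Finset.Icc 1 m, (-(ck k) / sk k)) + (1/2) * (-cθ/sθ) + (1/2) * (-cn/sn)) * w'))
      - (fn'/2) * (g * Pi * (cn * sθ))
      - ∑ k ∈ Finset.Icc 1 m, φd k * (4 * (g * ek k * (sk k * ck k) * (sn * sθ))) := by
  set SS : ℝ := ∑ k ∈ Finset.Icc 1 m, (-(ck k) / sk k) with hSS
  set TT : ℝ := ∑ k ∈ Finset.Icc 1 m, φd k * (4 * (ek k * (sk k * ck k))) with hTT
  have hsum1 : ∑ k ∈ Finset.Icc 1 m, ek k * (4 * sk k * ck k * (w' - φd k))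
      = SS * (-(Pi * w')) - TT := by
    rw [hSS, hTT, Finset.sum_mul, ← Finset.sum_sub_distrib]
    refine Finset.sum_congr rfl fun k hk => ?_
    rw [hPi k hk]
    have := hsk k hk
    field_simp
  have hsum2 : ∑ k ∈ Finset.Icc 1 m, φd k * (4 * (g * ek k * (sk k * ck k) * (sn * sθ)))
      = g * (sn * sθ) * TT := by
    rw [hTT, Finset.mul_sum]
    refine Finset.sum_congr rfl fun k hk => by ring
  rw [hsum1, hsum2]
  field_simp
  ring


open Polynomial

/-- Theorem (discrete measure, monotonicity): under the discrete paraorthogonality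
setup with fixed zero `e^{iθ₀}`, if at some `t ∈ I` one has `W_j(t) ≥ 0` for all `j`
and `W_j(t) > 0` for some `j`, then `φ_n'(t) > 0`, i.e. the zero `ζ(t) = e^{iφ_n(t)}`
moves strictly counterclockwise along the unit circle as `t` increases. -/
theorem discrete_popuc_zero_moves_counterclockwise
    -- the open interval `I = (a, b)`
    (a b : ℝ) (hab : a < b)
    -- the masses `γ_j` and mass points `ω_j`, `j = 0, …, N`
    (N : ℕ) (γ ω : ℕ → ℝ → ℝ)
    (hγpos : ∀ j ≤ N, ∀ t ∈ Set.Ioo a b, 0 < γ j t)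
    (hγdiff : ∀ j ≤ N, ∀ t ∈ Set.Ioo a b, DifferentiableAt ℝ (γ j) t)
    (hωdiff : ∀ j ≤ N, ∀ t ∈ Set.Ioo a b, DifferentiableAt ℝ (ω j) t)
    -- the zeros `e^{iφ_k(t)}`, `k = 1, …, n`, of the POPUC `P(·; t)`
    (n : ℕ) (hn : 2 ≤ n) (θ₀ : ℝ) (φ : ℕ → ℝ → ℝ)
    (hφdiff : ∀ k ∈ Finset.Icc 1 n, ∀ t ∈ Set.Ioo a b, DifferentiableAt ℝ (φ k) t)
    (hfix : ∀ t ∈ Set.Ioo a b, φ (n - 1) t = θ₀)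
    (P : ℂ → ℝ → ℂ)
    (hP : ∀ z t, P z t = ∏ k ∈ Finset.Icc 1 n, (z - Complex.exp (φ k t * Complex.I)))
    (hdistinct : ∀ t ∈ Set.Ioo a b, ∀ j ∈ Finset.Icc 1 n, ∀ k ∈ Finset.Icc 1 n, j ≠ k →
      Complex.exp (φ j t * Complex.I) ≠ Complex.exp (φ k t * Complex.I))
    (hsep : ∀ t ∈ Set.Ioo a b, ∀ j ≤ N, ∀ k ∈ Finset.Icc 1 n,
      Complex.exp (ω j t * Complex.I) ≠ Complex.exp (φ k t * Complex.I))
    -- paraorthogonality with respect to the measure `Σ_j γ_j(t) δ(θ − ω_j(t))`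
    (hpara : ∀ t ∈ Set.Ioo a b, ∀ g : Polynomial ℂ,
      g.natDegree ≤ n - 1 → g.eval 0 = 0 →
      ∑ j ∈ Finset.range (N + 1), (γ j t : ℂ) *
        P (Complex.exp (ω j t * Complex.I)) t *
        (starRingEnd ℂ) (g.eval (Complex.exp (ω j t * Complex.I))) = 0)
    -- the functions `s`, `S` and `W_j`
    (s : ℝ → ℝ → ℝ)
    (hs : ∀ θ t, s θ t = Real.sin ((φ n t - θ₀) / 2) /
      (2 * Real.sin ((φ n t - θ) / 2) * Real.sin ((θ₀ - θ) / 2)))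
    (S : ℝ → ℝ → ℝ)
    (hS : ∀ θ t, S θ t = (∑ k ∈ Finset.Icc 1 (n - 2), Real.cot ((φ k t - θ) / 2)) +
      (1 / 2) * Real.cot ((θ₀ - θ) / 2) + (1 / 2) * Real.cot ((φ n t - θ) / 2))
    (W : ℕ → ℝ → ℝ)
    (hW : ∀ j t, W j t = s (ω j t) t * deriv (γ j) t -
      γ j t * s (ω j t) t * S (ω j t) t * deriv (ω j) t)
    -- hypotheses on the sign of the `W_j` at a given `t`
    (t : ℝ) (ht : t ∈ Set.Ioo a b)
    (hWnonneg : ∀ j ≤ N, 0 ≤ W j t)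
    (hWpos : ∃ j ≤ N, 0 < W j t)
    -- conclusion
    : 0 < deriv (φ n) t := by
  obtain ⟨m, hm⟩ : ∃ m, n = m + 2 := ⟨n - 2, by omega⟩
  subst hm
  obtain ⟨ha, hb⟩ := ht
  have ht' : t ∈ Set.Ioo a b := ⟨ha, hb⟩
  have hfix' : ∀ τ ∈ Set.Ioo a b, φ (m+1) τ = θ₀ := hfix
  have hpara' : ∀ τ ∈ Set.Ioo a b, ∀ g : Polynomial ℂ,
      g.natDegree ≤ m + 1 → g.eval 0 = 0 →
      ∑ j ∈ Finset.range (N + 1), (γ j τ : ℂ) *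
        P (Complex.exp (ω j τ * Complex.I)) τ *
        (starRingEnd ℂ) (g.eval (Complex.exp (ω j τ * Complex.I))) = 0 := hpara
  have hS' : ∀ θ τ, S θ τ = (∑ k ∈ Finset.Icc 1 m, Real.cot ((φ k τ - θ) / 2)) +
      (1 / 2) * Real.cot ((θ₀ - θ) / 2) + (1 / 2) * Real.cot ((φ (m+2) τ - θ) / 2) := hS
  have hkmem : ∀ k ∈ Finset.Icc 1 m, k ∈ Finset.Icc 1 (m+2) := fun k hk => by
    rw [Finset.mem_Icc] at *; omega
  have hm1 : (m+1) ∈ Finset.Icc 1 (m+2) := Finset.mem_Icc.mpr ⟨by omega, by omega⟩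
  have hm2 : (m+2) ∈ Finset.Icc 1 (m+2) := Finset.mem_Icc.mpr ⟨by omega, by omega⟩
  -- nonvanishing of various sines at t
  have hsk : ∀ j ≤ N, ∀ k ∈ Finset.Icc 1 (m+2), Real.sin ((ω j t - φ k t)/2) ≠ 0 :=
    fun j hj k hk => sin_ne_of_exp_ne (hsep t ht' j hj k hk)
  have hsθ : ∀ j ≤ N, Real.sin ((ω j t - θ₀)/2) ≠ 0 := fun j hj => by
    have := hsk j hj (m+1) hm1
    rwa [hfix' t ht'] at this
  have hsδ : Real.sin ((φ (m+2) t - θ₀)/2) ≠ 0 := by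
    have h := hdistinct t ht' (m+2) hm2 (m+1) hm1 (by omega)
    rw [hfix' t ht'] at h
    exact sin_ne_of_exp_ne h
  -- G ≡ 0 on the interval, T_k = 0 at t
  have hG0 : ∀ τ ∈ Set.Ioo a b, ∑ j ∈ Finset.range (N+1),
      γ j τ * auxPi ω φ m j τ * auxSg ω φ m θ₀ j τ = 0 := fun τ hτ =>
    paraG_zero m N θ₀ τ γ ω φ P hP (hfix' τ hτ) (hpara' τ hτ)
  have hT : ∀ k ∈ Finset.Icc 1 m, ∑ j ∈ Finset.range (N+1), γ j t *
      (∏ k' ∈ (Finset.Icc 1 m).erase k, (4 * Real.sin ((ω j t - φ k' t)/2)^2)) *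
      (Real.sin ((ω j t - φ k t)/2) * Real.cos ((ω j t - φ k t)/2)) * auxSg ω φ m θ₀ j t = 0 :=
    fun k hk => paraT_zero m N θ₀ t γ ω φ P hP (hfix' t ht') (hpara' t ht') k hk
  -- positivity facts
  have hPipos : ∀ j ≤ N, 0 < auxPi ω φ m j t := fun j hj => by
    refine Finset.prod_pos fun k hk => ?_
    have := hsk j hj k (hkmem k hk)
    positivity
  have hsgne : ∀ j ≤ N, auxSg ω φ m θ₀ j t ≠ 0 := fun j hj =>
    mul_ne_zero (hsk j hj (m+2) hm2) (hsθ j hj)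
  -- the derivative of G at t
  set D : ℝ := ∑ j ∈ Finset.range (N+1),
    ((deriv (γ j) t * auxPi ω φ m j t +
      γ j t * (∑ k ∈ Finset.Icc 1 m,
        (∏ k' ∈ (Finset.Icc 1 m).erase k, (4 * Real.sin ((ω j t - φ k' t)/2)^2)) *
        (4 * Real.sin ((ω j t - φ k t)/2) * Real.cos ((ω j t - φ k t)/2) *
          (deriv (ω j) t - deriv (φ k) t)))) * auxSg ω φ m θ₀ j t
     + (γ j t * auxPi ω φ m j t) *
       (Real.cos ((ω j t - φ (m+2) t)/2) * ((deriv (ω j) t - deriv (φ (m+2)) t)/2) *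
          Real.sin ((ω j t - θ₀)/2)
        + Real.sin ((ω j t - φ (m+2) t)/2) *
            (Real.cos ((ω j t - θ₀)/2) * (deriv (ω j) t / 2)))) with hD
  have hGderiv : HasDerivAt (fun τ => ∑ j ∈ Finset.range (N+1),
      γ j τ * auxPi ω φ m j τ * auxSg ω φ m θ₀ j τ) D t := by
    rw [hD]
    refine HasDerivAt.fun_sum fun j hj => ?_
    have hj' : j ≤ N := by rw [Finset.mem_range] at hj; omega
    have hγj := (hγdiff j hj' t ht').hasDerivAt
    have hωj := (hωdiff j hj' t ht').hasDerivAt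
    have hφk : ∀ k ∈ Finset.Icc 1 (m+2), HasDerivAt (φ k) (deriv (φ k) t) t :=
      fun k hk => (hφdiff k hk t ht').hasDerivAt
    have hPid : HasDerivAt (auxPi ω φ m j)
        (∑ k ∈ Finset.Icc 1 m,
          (∏ k' ∈ (Finset.Icc 1 m).erase k, (4 * Real.sin ((ω j t - φ k' t)/2)^2)) *
          (4 * Real.sin ((ω j t - φ k t)/2) * Real.cos ((ω j t - φ k t)/2) *
            (deriv (ω j) t - deriv (φ k) t))) t := by
      have hfac : ∀ k ∈ Finset.Icc 1 m,
          HasDerivAt (fun τ => 4 * Real.sin ((ω j τ - φ k τ)/2)^2)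
          (4 * Real.sin ((ω j t - φ k t)/2) * Real.cos ((ω j t - φ k t)/2) *
            (deriv (ω j) t - deriv (φ k) t)) t := by
        intro k hk
        have h1 : HasDerivAt (fun τ => (ω j τ - φ k τ)/2)
            ((deriv (ω j) t - deriv (φ k) t)/2) t :=
          (hωj.sub (hφk k (hkmem k hk))).div_const 2
        have h2 := (h1.sin.pow 2).const_mul (4:ℝ)
        exact h2.congr_deriv (by ring)
      have h3 := HasDerivAt.fun_finsetProd hfac
      simp only [smul_eq_mul] at h3
      exact h3
    have hsgd : HasDerivAt (auxSg ω φ m θ₀ j)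
        (Real.cos ((ω j t - φ (m+2) t)/2) * ((deriv (ω j) t - deriv (φ (m+2)) t)/2) *
            Real.sin ((ω j t - θ₀)/2)
         + Real.sin ((ω j t - φ (m+2) t)/2) *
            (Real.cos ((ω j t - θ₀)/2) * (deriv (ω j) t / 2))) t := by
      have h1 : HasDerivAt (fun τ => (ω j τ - φ (m+2) τ)/2)
          ((deriv (ω j) t - deriv (φ (m+2)) t)/2) t :=
        (hωj.sub (hφk (m+2) hm2)).div_const 2
      have h2 : HasDerivAt (fun τ => (ω j τ - θ₀)/2) (deriv (ω j) t / 2) t :=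
        (hωj.sub_const θ₀).div_const 2
      exact h1.sin.mul h2.sin
    exact (hγj.mul hPid).mul hsgd
  have hDzero : D = 0 := by
    have hEq : deriv (fun τ => ∑ j ∈ Finset.range (N+1),
        γ j τ * auxPi ω φ m j τ * auxSg ω φ m θ₀ j τ) t = D := hGderiv.deriv
    have hEv : (fun τ => ∑ j ∈ Finset.range (N+1),
        γ j τ * auxPi ω φ m j τ * auxSg ω φ m θ₀ j τ) =ᶠ[nhds t] fun _ => (0:ℝ) := by
      filter_upwards [Ioo_mem_nhds ha hb] with τ hτ using hG0 τ hτ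
    rw [← hEq, hEv.deriv_eq]
    simp
  -- the key algebraic identity
  have hKey : D = (2 / Real.sin ((φ (m+2) t - θ₀)/2)) *
      (∑ j ∈ Finset.range (N+1),
        auxPi ω φ m j t * auxSg ω φ m θ₀ j t ^ 2 * W j t)
      - (deriv (φ (m+2)) t / 2) *
        (∑ j ∈ Finset.range (N+1), (γ j t * auxPi ω φ m j t) *
          (Real.cos ((ω j t - φ (m+2) t)/2) * Real.sin ((ω j t - θ₀)/2))) := by
    have hmain : D = (2 / Real.sin ((φ (m+2) t - θ₀)/2)) *
        (∑ j ∈ Finset.range (N+1), auxPi ω φ m j t * auxSg ω φ m θ₀ j t ^ 2 * W j t)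
        - (deriv (φ (m+2)) t / 2) *
          (∑ j ∈ Finset.range (N+1), (γ j t * auxPi ω φ m j t) *
            (Real.cos ((ω j t - φ (m+2) t)/2) * Real.sin ((ω j t - θ₀)/2)))
        - ∑ k ∈ Finset.Icc 1 m, deriv (φ k) t *
            (4 * (∑ j ∈ Finset.range (N+1), γ j t *
              (∏ k' ∈ (Finset.Icc 1 m).erase k, (4 * Real.sin ((ω j t - φ k' t)/2)^2)) *
              (Real.sin ((ω j t - φ k t)/2) * Real.cos ((ω j t - φ k t)/2)) *
              auxSg ω φ m θ₀ j t)) := by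
      rw [hD, Finset.mul_sum, Finset.mul_sum]
      have h31 : ∑ k ∈ Finset.Icc 1 m, deriv (φ k) t *
          (4 * (∑ j ∈ Finset.range (N+1), γ j t *
            (∏ k' ∈ (Finset.Icc 1 m).erase k, (4 * Real.sin ((ω j t - φ k' t)/2)^2)) *
            (Real.sin ((ω j t - φ k t)/2) * Real.cos ((ω j t - φ k t)/2)) *
            auxSg ω φ m θ₀ j t))
          = ∑ j ∈ Finset.range (N+1), ∑ k ∈ Finset.Icc 1 m, deriv (φ k) t *
            (4 * (γ j t *
              (∏ k' ∈ (Finset.Icc 1 m).erase k, (4 * Real.sin ((ω j t - φ k' t)/2)^2)) *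
              (Real.sin ((ω j t - φ k t)/2) * Real.cos ((ω j t - φ k t)/2)) *
              auxSg ω φ m θ₀ j t)) := by
        rw [Finset.sum_comm]
        refine Finset.sum_congr rfl fun k _ => ?_
        simp only [Finset.mul_sum]
      rw [h31, ← Finset.sum_sub_distrib, ← Finset.sum_sub_distrib]
      refine Finset.sum_congr rfl fun j hj => ?_
      have hj' : j ≤ N := by rw [Finset.mem_range] at hj; omega
      have hsn := hsk j hj' (m+2) hm2
      have hsθj := hsθ j hj'
      have hskj : ∀ k ∈ Finset.Icc 1 m, Real.sin ((ω j t - φ k t)/2) ≠ 0 :=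
        fun k hk => hsk j hj' k (hkmem k hk)
      have hPif : ∀ k ∈ Finset.Icc 1 m, auxPi ω φ m j t =
          (∏ k' ∈ (Finset.Icc 1 m).erase k, (4 * Real.sin ((ω j t - φ k' t)/2)^2)) *
          (4 * Real.sin ((ω j t - φ k t)/2) ^ 2) := by
        intro k hk
        simp only [auxPi]
        exact (Finset.prod_erase_mul _ _ hk).symm
      have hsval : s (ω j t) t = Real.sin ((φ (m+2) t - θ₀)/2) /
          (2 * (Real.sin ((ω j t - φ (m+2) t)/2) * Real.sin ((ω j t - θ₀)/2))) := by
        rw [hs]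
        rw [show (φ (m+2) t - ω j t)/2 = -((ω j t - φ (m+2) t)/2) by ring,
          show (θ₀ - ω j t)/2 = -((ω j t - θ₀)/2) by ring, Real.sin_neg, Real.sin_neg]
        rw [show 2 * -Real.sin ((ω j t - φ (m+2) t)/2) * -Real.sin ((ω j t - θ₀)/2)
          = 2 * (Real.sin ((ω j t - φ (m+2) t)/2) * Real.sin ((ω j t - θ₀)/2)) by ring]
      have hSval : S (ω j t) t =
          (∑ k ∈ Finset.Icc 1 m,
            (-Real.cos ((ω j t - φ k t)/2) / Real.sin ((ω j t - φ k t)/2)))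
          + (1/2) * (-Real.cos ((ω j t - θ₀)/2) / Real.sin ((ω j t - θ₀)/2))
          + (1/2) * (-Real.cos ((ω j t - φ (m+2) t)/2) / Real.sin ((ω j t - φ (m+2) t)/2)) := by
        rw [hS']
        congr 2
        · refine Finset.sum_congr rfl fun k _ => ?_
          rw [Real.cot_eq_cos_div_sin,
            show (φ k t - ω j t)/2 = -((ω j t - φ k t)/2) by ring,
            Real.cos_neg, Real.sin_neg, div_neg, neg_div]
        · rw [Real.cot_eq_cos_div_sin,
            show (θ₀ - ω j t)/2 = -((ω j t - θ₀)/2) by ring,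
            Real.cos_neg, Real.sin_neg, div_neg, neg_div]
        · rw [Real.cot_eq_cos_div_sin,
            show (φ (m+2) t - ω j t)/2 = -((ω j t - φ (m+2) t)/2) by ring,
            Real.cos_neg, Real.sin_neg, div_neg, neg_div]
      rw [hW j t, hsval, hSval]
      simp only [auxSg]
      exact perj_identity m (fun k => deriv (φ k) t)
        (fun k => Real.sin ((ω j t - φ k t)/2)) (fun k => Real.cos ((ω j t - φ k t)/2))
        (fun k => ∏ k' ∈ (Finset.Icc 1 m).erase k, (4 * Real.sin ((ω j t - φ k' t)/2)^2))
        hskj (auxPi ω φ m j t) hPif (γ j t) (deriv (γ j) t) (deriv (ω j) t)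
        (deriv (φ (m+2)) t) (Real.sin ((φ (m+2) t - θ₀)/2))
        (Real.sin ((ω j t - φ (m+2) t)/2)) (Real.cos ((ω j t - φ (m+2) t)/2))
        (Real.sin ((ω j t - θ₀)/2)) (Real.cos ((ω j t - θ₀)/2)) hsn hsθj hsδ
    rw [hmain]
    have hz : ∑ k ∈ Finset.Icc 1 m, deriv (φ k) t *
        (4 * (∑ j ∈ Finset.range (N+1), γ j t *
          (∏ k' ∈ (Finset.Icc 1 m).erase k, (4 * Real.sin ((ω j t - φ k' t)/2)^2)) *
          (Real.sin ((ω j t - φ k t)/2) * Real.cos ((ω j t - φ k t)/2)) *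
          auxSg ω φ m θ₀ j t)) = 0 := by
      refine Finset.sum_eq_zero fun k hk => ?_
      rw [hT k hk]
      ring
    rw [hz, sub_zero]
  -- positivity of the two factors
  have hA : 0 < ∑ j ∈ Finset.range (N+1),
      auxPi ω φ m j t * auxSg ω φ m θ₀ j t ^ 2 * W j t := by
    obtain ⟨j₀, hj₀, hWj₀⟩ := hWpos
    refine Finset.sum_pos' (fun j hj => ?_) ⟨j₀, Finset.mem_range.mpr (by omega), ?_⟩
    · have hj' : j ≤ N := by
        rw [Finset.mem_range] at hj; omega
      have h1 := hPipos j hj'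
      have h2 := hWnonneg j hj'
      positivity
    · have h1 := hPipos j₀ hj₀
      have h2 := hsgne j₀ hj₀
      positivity
  have hM : 0 < Real.sin ((φ (m+2) t - θ₀)/2) *
      ∑ j ∈ Finset.range (N+1), (γ j t * auxPi ω φ m j t) *
        (Real.cos ((ω j t - φ (m+2) t)/2) * Real.sin ((ω j t - θ₀)/2)) := by
    refine Msign_abstract N (fun j => γ j t * auxPi ω φ m j t) (fun j => ω j t)
      (φ (m+2) t) θ₀ (fun j hj => ?_) (fun j hj => ?_) (fun j hj => ?_) hsδ ?_
    · have hj' : j ≤ N := by rw [Finset.mem_range] at hj; omega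
      exact mul_pos (hγpos j hj' t ht') (hPipos j hj')
    · have hj' : j ≤ N := by rw [Finset.mem_range] at hj; omega
      exact hsk j hj' (m+2) hm2
    · have hj' : j ≤ N := by rw [Finset.mem_range] at hj; omega
      exact hsθ j hj'
    · have := hG0 t ht'
      rw [← this]
      exact Finset.sum_congr rfl fun j hj => by simp only [auxSg]
  -- conclude
  rw [hKey] at hDzero
  set x := deriv (φ (m+2)) t
  set A := ∑ j ∈ Finset.range (N+1), auxPi ω φ m j t * auxSg ω φ m θ₀ j t ^ 2 * W j t
  set Ms := ∑ j ∈ Finset.range (N+1), (γ j t * auxPi ω φ m j t) *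
    (Real.cos ((ω j t - φ (m+2) t)/2) * Real.sin ((ω j t - θ₀)/2))
  set sδ := Real.sin ((φ (m+2) t - θ₀)/2)
  have h4 : 4 * A = x * (sδ * Ms) := by
    have h5 : (2 / sδ) * A = (x / 2) * Ms := by linarith
    field_simp at h5
    nlinarith [h5]
  by_contra hcon
  push_neg at hcon
  have hle : x * (sδ * Ms) ≤ 0 := mul_nonpos_of_nonpos_of_nonneg hcon (le_of_lt hM)
  linarith
end

section
/- (Theorem, discrete measure, constancy.) Under the stated discrete paraorthogonality setup with fixed zero e^{iθ₀}, if W_j(t) = 0 for all t ∈ I and all j = 0,…,N, then φ_n′(t) = 0 for all t ∈ I; that is, the zero ζ(t) = e^{iφ_n(t)} does not move as t increases on I. -/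
open Polynomial

lemma cexp_core_sub (c : ℂ) :
    Complex.exp (c * Complex.I) - Complex.exp (-c * Complex.I)
      = 2 * Complex.I * Complex.sin c := by
  rw [Complex.exp_mul_I, Complex.exp_mul_I, Complex.cos_neg, Complex.sin_neg]; ring

lemma cexp_core_add (c : ℂ) :
    Complex.exp (c * Complex.I) + Complex.exp (-c * Complex.I)
      = 2 * Complex.cos c := by
  rw [Complex.exp_mul_I, Complex.exp_mul_I, Complex.cos_neg, Complex.sin_neg]; ring

lemma pexp_sub (x y : ℝ) :
    Complex.exp (x * Complex.I) - Complex.exp (y * Complex.I)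
      = 2 * Complex.I * (Real.sin ((x - y)/2) : ℂ) * Complex.exp ((((x + y)/2 : ℝ)) * Complex.I) := by
  have h1 : (x : ℂ) * Complex.I = (((x-y)/2 : ℂ)) * Complex.I + (((x+y)/2 : ℂ)) * Complex.I := by ring
  have h2 : (y : ℂ) * Complex.I = (-((x-y)/2 : ℂ)) * Complex.I + (((x+y)/2 : ℂ)) * Complex.I := by ring
  push_cast
  rw [h1, h2, Complex.exp_add, Complex.exp_add, ← sub_mul, cexp_core_sub]

lemma pexp_add (x y : ℝ) :
    Complex.exp (x * Complex.I) + Complex.exp (y * Complex.I)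
      = 2 * (Real.cos ((x - y)/2) : ℂ) * Complex.exp ((((x + y)/2 : ℝ)) * Complex.I) := by
  have h1 : (x : ℂ) * Complex.I = (((x-y)/2 : ℂ)) * Complex.I + (((x+y)/2 : ℂ)) * Complex.I := by ring
  have h2 : (y : ℂ) * Complex.I = (-((x-y)/2 : ℂ)) * Complex.I + (((x+y)/2 : ℂ)) * Complex.I := by ring
  push_cast
  rw [h1, h2, Complex.exp_add, Complex.exp_add, ← add_mul, cexp_core_add]

lemma pconj_exp (x : ℝ) :
    (starRingEnd ℂ) (Complex.exp (x * Complex.I)) = Complex.exp ((-x : ℝ) * Complex.I) := by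
  rw [← Complex.exp_conj, map_mul, Complex.conj_I, Complex.conj_ofReal]
  push_cast; ring_nf

lemma pexp_mul_exp_neg (x : ℝ) :
    Complex.exp (x * Complex.I) * Complex.exp ((-x : ℝ) * Complex.I) = 1 := by
  rw [← Complex.exp_add]
  push_cast
  rw [show (x:ℂ) * Complex.I + -x * Complex.I = 0 by ring, Complex.exp_zero]

lemma pexp_pair (x y : ℝ) :
    (Complex.exp (x * Complex.I) - Complex.exp (y * Complex.I)) *
      (Complex.exp ((-x : ℝ) * Complex.I) - Complex.exp ((-y : ℝ) * Complex.I))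
      = ((4 * Real.sin ((x - y)/2) ^ 2 : ℝ) : ℂ) := by
  rw [pexp_sub, pexp_sub]
  rw [show ((-x - -y)/2 : ℝ) = -((x - y)/2) by ring, Real.sin_neg,
    show ((-x + -y)/2 : ℝ) = -((x+y)/2 : ℝ) by ring]
  have h := pexp_mul_exp_neg ((x+y)/2)
  have hI : Complex.I ^ 2 = -1 := Complex.I_sq
  push_cast at h ⊢
  linear_combination ((-4:ℂ) * Complex.sin (((x:ℂ) - y)/2)^2 * Complex.I^2) * h
    + (-4 * Complex.sin (((x:ℂ) - y)/2)^2) * hI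

lemma pexp_pair2 (x y : ℝ) :
    (Complex.exp (x * Complex.I) - Complex.exp (y * Complex.I)) *
      (Complex.exp ((-x : ℝ) * Complex.I) + Complex.exp ((-y : ℝ) * Complex.I))
      = 2 * Complex.I * ((Real.sin (x - y) : ℝ) : ℂ) := by
  rw [pexp_sub, pexp_add]
  rw [show ((-x - -y)/2 : ℝ) = -((x - y)/2) by ring, Real.cos_neg,
    show ((-x + -y)/2 : ℝ) = -((x+y)/2 : ℝ) by ring]
  have h := pexp_mul_exp_neg ((x+y)/2)
  have hsd : Real.sin (x - y) = 2 * Real.sin ((x-y)/2) * Real.cos ((x-y)/2) := by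
    rw [← Real.sin_two_mul]; ring_nf
  rw [hsd]
  push_cast at h ⊢
  linear_combination ((4:ℂ) * Complex.I * Complex.sin (((x:ℂ) - y)/2) * Complex.cos (((x:ℂ) - y)/2)) * h

lemma pexp_tri (x p q : ℝ) :
    (Complex.exp (x * Complex.I) - Complex.exp (p * Complex.I)) *
      (Complex.exp (x * Complex.I) - Complex.exp (q * Complex.I)) *
      Complex.exp ((-x : ℝ) * Complex.I)
      = -4 * ((Real.sin ((x - p)/2) * Real.sin ((x - q)/2) : ℝ) : ℂ) *
        Complex.exp ((((p + q)/2 : ℝ)) * Complex.I) := by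
  rw [pexp_sub, pexp_sub]
  have hE : Complex.exp ((((x + p)/2 : ℝ)) * Complex.I) * Complex.exp ((((x + q)/2 : ℝ)) * Complex.I)
      * Complex.exp ((-x : ℝ) * Complex.I) = Complex.exp ((((p + q)/2 : ℝ)) * Complex.I) := by
    rw [← Complex.exp_add, ← Complex.exp_add]; congr 1; push_cast; ring
  have hI : Complex.I ^ 2 = -1 := Complex.I_sq
  push_cast at hE ⊢
  linear_combination ((4:ℂ) * Complex.I^2 * Complex.sin (((x:ℂ) - p)/2) * Complex.sin (((x:ℂ) - q)/2)) * hE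
    + (4 * Complex.sin (((x:ℂ) - p)/2) * Complex.sin (((x:ℂ) - q)/2)
        * Complex.exp (((p:ℂ) + q)/2 * Complex.I)) * hI

lemma psin_ne_zero {x y : ℝ} (h : Complex.exp (x * Complex.I) ≠ Complex.exp (y * Complex.I)) :
    Real.sin ((x - y)/2) ≠ 0 := by
  intro hsin
  apply h
  rw [Real.sin_eq_zero_iff] at hsin
  obtain ⟨k, hk⟩ := hsin
  have hr : x = y + (k : ℝ) * (2 * Real.pi) := by linarith
  rw [Complex.exp_eq_exp_iff_exists_int]
  refine ⟨k, ?_⟩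
  have := congrArg (fun r : ℝ => (r : ℂ) * Complex.I) hr
  push_cast at this ⊢
  linear_combination this

open Polynomial in
lemma pprod_monic (s : Finset ℕ) (c : ℕ → ℂ) :
    (∏ l ∈ s, (Polynomial.X - Polynomial.C (c l))).Monic :=
  monic_prod_of_monic _ _ (fun _ _ => monic_X_sub_C _)

open Polynomial in
lemma pprod_natDegree (s : Finset ℕ) (c : ℕ → ℂ) :
    (∏ l ∈ s, (Polynomial.X - Polynomial.C (c l))).natDegree = s.card := by
  rw [Polynomial.natDegree_prod_of_monic _ _ (fun _ _ => monic_X_sub_C _)]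
  simp

open Polynomial in
lemma pg_natDegree (s : Finset ℕ) (c : ℕ → ℂ) :
    (Polynomial.X * ∏ l ∈ s, (Polynomial.X - Polynomial.C (c l))).natDegree = s.card + 1 := by
  rw [Polynomial.natDegree_mul Polynomial.X_ne_zero (pprod_monic s c).ne_zero,
    Polynomial.natDegree_X, pprod_natDegree]
  ring

open Polynomial in
lemma pg2_natDegree (s : Finset ℕ) (c : ℕ → ℂ) (d : ℂ) :
    (Polynomial.X * ((Polynomial.X - Polynomial.C d) *
      ∏ l ∈ s, (Polynomial.X - Polynomial.C (c l)))).natDegree = s.card + 2 := by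
  have h2 : ((Polynomial.X - Polynomial.C d) *
      ∏ l ∈ s, (Polynomial.X - Polynomial.C (c l))).Monic :=
    (monic_X_sub_C d).mul (pprod_monic s c)
  rw [Polynomial.natDegree_mul Polynomial.X_ne_zero h2.ne_zero, Polynomial.natDegree_X,
    Polynomial.natDegree_mul (monic_X_sub_C d).ne_zero (pprod_monic s c).ne_zero,
    Polynomial.natDegree_X_sub_C, pprod_natDegree]
  ring

open Polynomial in
lemma icc_split (m : ℕ) (f : ℕ → ℂ) :
    ∏ k ∈ Finset.Icc 1 (m+2), f k = ((∏ k ∈ Finset.Icc 1 m, f k) * f (m+1)) * f (m+2) := by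
  rw [Finset.prod_Icc_succ_top (by omega : 1 ≤ m + 2), Finset.prod_Icc_succ_top (by omega : 1 ≤ m + 1)]

/-- Identity (A). -/
lemma identA (N m : ℕ) (γv ωv φv : ℕ → ℝ) (θ₀ : ℝ)
    (hp : ∑ j ∈ Finset.range (N+1), (γv j : ℂ) *
        (∏ k ∈ Finset.Icc 1 (m+2), (Complex.exp (ωv j * Complex.I) - Complex.exp (φv k * Complex.I))) *
        (starRingEnd ℂ) ((Polynomial.X * ∏ l ∈ Finset.Icc 1 m,
          (Polynomial.X - Polynomial.C (Complex.exp (φv l * Complex.I)))).eval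
            (Complex.exp (ωv j * Complex.I))) = 0)
    (hθ : φv (m+1) = θ₀) :
    ∑ j ∈ Finset.range (N+1), γv j * ((∏ l ∈ Finset.Icc 1 m, Real.sin ((ωv j - φv l)/2)^2) *
      (Real.sin ((ωv j - θ₀)/2) * Real.sin ((ωv j - φv (m+2))/2))) = 0 := by
  have key : ∀ j ∈ Finset.range (N+1), (γv j : ℂ) *
      (∏ k ∈ Finset.Icc 1 (m+2), (Complex.exp (ωv j * Complex.I) - Complex.exp (φv k * Complex.I))) *
      (starRingEnd ℂ) ((Polynomial.X * ∏ l ∈ Finset.Icc 1 m,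
        (Polynomial.X - Polynomial.C (Complex.exp (φv l * Complex.I)))).eval
          (Complex.exp (ωv j * Complex.I)))
      = (-4 * Complex.exp ((((θ₀ + φv (m+2))/2 : ℝ)) * Complex.I) * (4:ℂ)^m) *
        ((γv j * ((∏ l ∈ Finset.Icc 1 m, Real.sin ((ωv j - φv l)/2)^2) *
          (Real.sin ((ωv j - θ₀)/2) * Real.sin ((ωv j - φv (m+2))/2))) : ℝ) : ℂ) := by
    intro j _
    have e1 : (Polynomial.X * ∏ l ∈ Finset.Icc 1 m,
        (Polynomial.X - Polynomial.C (Complex.exp (φv l * Complex.I)))).eval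
          (Complex.exp (ωv j * Complex.I))
        = Complex.exp (ωv j * Complex.I) * ∏ l ∈ Finset.Icc 1 m,
            (Complex.exp (ωv j * Complex.I) - Complex.exp (φv l * Complex.I)) := by
      simp [Polynomial.eval_prod]
    rw [e1, map_mul, map_prod, pconj_exp]
    have e2 : ∀ l ∈ Finset.Icc 1 m, (starRingEnd ℂ)
        (Complex.exp (ωv j * Complex.I) - Complex.exp (φv l * Complex.I))
        = Complex.exp ((-ωv j : ℝ) * Complex.I) - Complex.exp ((-φv l : ℝ) * Complex.I) := by
      intro l _
      rw [map_sub, pconj_exp, pconj_exp]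
    rw [Finset.prod_congr rfl e2, icc_split, hθ]
    have e3 : (∏ l ∈ Finset.Icc 1 m,
          (Complex.exp (ωv j * Complex.I) - Complex.exp (φv l * Complex.I))) *
        (∏ l ∈ Finset.Icc 1 m,
          (Complex.exp ((-ωv j : ℝ) * Complex.I) - Complex.exp ((-φv l : ℝ) * Complex.I)))
        = ((∏ l ∈ Finset.Icc 1 m, (4 * Real.sin ((ωv j - φv l)/2)^2) : ℝ) : ℂ) := by
      rw [← Finset.prod_mul_distrib, Complex.ofReal_prod]
      exact Finset.prod_congr rfl (fun l _ => pexp_pair (ωv j) (φv l))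
    have e4 := pexp_tri (ωv j) θ₀ (φv (m+2))
    have e5 : ((∏ l ∈ Finset.Icc 1 m, (4 * Real.sin ((ωv j - φv l)/2)^2) : ℝ) : ℂ)
        = (4:ℂ)^m * ((∏ l ∈ Finset.Icc 1 m, Real.sin ((ωv j - φv l)/2)^2 : ℝ) : ℂ) := by
      rw [Finset.prod_mul_distrib, Finset.prod_const, Nat.card_Icc]
      push_cast
      ring
    calc (γv j : ℂ) *
        ((∏ l ∈ Finset.Icc 1 m,
          (Complex.exp (ωv j * Complex.I) - Complex.exp (φv l * Complex.I))) *
          (Complex.exp (ωv j * Complex.I) - Complex.exp (θ₀ * Complex.I)) *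
          (Complex.exp (ωv j * Complex.I) - Complex.exp (φv (m+2) * Complex.I))) *
        (Complex.exp ((-ωv j : ℝ) * Complex.I) * ∏ l ∈ Finset.Icc 1 m,
          (Complex.exp ((-ωv j : ℝ) * Complex.I) - Complex.exp ((-φv l : ℝ) * Complex.I)))
        = ((∏ l ∈ Finset.Icc 1 m,
            (Complex.exp (ωv j * Complex.I) - Complex.exp (φv l * Complex.I))) *
          (∏ l ∈ Finset.Icc 1 m,
            (Complex.exp ((-ωv j : ℝ) * Complex.I) - Complex.exp ((-φv l : ℝ) * Complex.I)))) *
          ((Complex.exp (ωv j * Complex.I) - Complex.exp (θ₀ * Complex.I)) *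
            (Complex.exp (ωv j * Complex.I) - Complex.exp (φv (m+2) * Complex.I)) *
            Complex.exp ((-ωv j : ℝ) * Complex.I)) * (γv j : ℂ) := by ring
      _ = _ := by
          rw [e3, e4, e5]
          push_cast
          ring
  rw [Finset.sum_congr rfl key, ← Finset.mul_sum] at hp
  have hK : (-4 * Complex.exp ((((θ₀ + φv (m+2))/2 : ℝ)) * Complex.I) * (4:ℂ)^m) ≠ 0 := by
    exact mul_ne_zero (mul_ne_zero (by norm_num) (Complex.exp_ne_zero _))
      (pow_ne_zero _ (by norm_num))
  have h0 := (mul_eq_zero.mp hp).resolve_left hK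
  rw [← Complex.ofReal_sum] at h0
  exact_mod_cast h0

/-- Identity (C_k). -/
lemma identC (N m : ℕ) (γv ωv φv : ℕ → ℝ) (θ₀ : ℝ) (k : ℕ) (hk : k ∈ Finset.Icc 1 m)
    (hp : ∑ j ∈ Finset.range (N+1), (γv j : ℂ) *
        (∏ r ∈ Finset.Icc 1 (m+2), (Complex.exp (ωv j * Complex.I) - Complex.exp (φv r * Complex.I))) *
        (starRingEnd ℂ) ((Polynomial.X * ((Polynomial.X - Polynomial.C (-Complex.exp (φv k * Complex.I))) *
          ∏ l ∈ (Finset.Icc 1 m).erase k,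
          (Polynomial.X - Polynomial.C (Complex.exp (φv l * Complex.I))))).eval
            (Complex.exp (ωv j * Complex.I))) = 0)
    (hθ : φv (m+1) = θ₀) :
    ∑ j ∈ Finset.range (N+1), γv j * (Real.sin (ωv j - φv k) *
      ((∏ l ∈ (Finset.Icc 1 m).erase k, Real.sin ((ωv j - φv l)/2)^2) *
      (Real.sin ((ωv j - θ₀)/2) * Real.sin ((ωv j - φv (m+2))/2)))) = 0 := by
  set c : ℕ := ((Finset.Icc 1 m).erase k).card with hc
  have key : ∀ j ∈ Finset.range (N+1), (γv j : ℂ) *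
      (∏ r ∈ Finset.Icc 1 (m+2), (Complex.exp (ωv j * Complex.I) - Complex.exp (φv r * Complex.I))) *
      (starRingEnd ℂ) ((Polynomial.X * ((Polynomial.X - Polynomial.C (-Complex.exp (φv k * Complex.I))) *
        ∏ l ∈ (Finset.Icc 1 m).erase k,
        (Polynomial.X - Polynomial.C (Complex.exp (φv l * Complex.I))))).eval
          (Complex.exp (ωv j * Complex.I)))
      = (-8 * Complex.I * Complex.exp ((((θ₀ + φv (m+2))/2 : ℝ)) * Complex.I) * (4:ℂ)^c) *
        ((γv j * (Real.sin (ωv j - φv k) *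
          ((∏ l ∈ (Finset.Icc 1 m).erase k, Real.sin ((ωv j - φv l)/2)^2) *
          (Real.sin ((ωv j - θ₀)/2) * Real.sin ((ωv j - φv (m+2))/2))))) : ℝ) := by
    intro j _
    have e1 : (Polynomial.X * ((Polynomial.X - Polynomial.C (-Complex.exp (φv k * Complex.I))) *
        ∏ l ∈ (Finset.Icc 1 m).erase k,
        (Polynomial.X - Polynomial.C (Complex.exp (φv l * Complex.I))))).eval
          (Complex.exp (ωv j * Complex.I))
        = Complex.exp (ωv j * Complex.I) *
          ((Complex.exp (ωv j * Complex.I) + Complex.exp (φv k * Complex.I)) *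
          ∏ l ∈ (Finset.Icc 1 m).erase k,
            (Complex.exp (ωv j * Complex.I) - Complex.exp (φv l * Complex.I))) := by
      simp [Polynomial.eval_prod, sub_neg_eq_add]
    rw [e1, map_mul, map_mul, map_add, map_prod, pconj_exp, pconj_exp]
    have e2 : ∀ l ∈ (Finset.Icc 1 m).erase k, (starRingEnd ℂ)
        (Complex.exp (ωv j * Complex.I) - Complex.exp (φv l * Complex.I))
        = Complex.exp ((-ωv j : ℝ) * Complex.I) - Complex.exp ((-φv l : ℝ) * Complex.I) := by
      intro l _
      rw [map_sub, pconj_exp, pconj_exp]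
    rw [Finset.prod_congr rfl e2, icc_split, hθ,
      ← Finset.mul_prod_erase _ _ hk]
    have e3 : (∏ l ∈ (Finset.Icc 1 m).erase k,
          (Complex.exp (ωv j * Complex.I) - Complex.exp (φv l * Complex.I))) *
        (∏ l ∈ (Finset.Icc 1 m).erase k,
          (Complex.exp ((-ωv j : ℝ) * Complex.I) - Complex.exp ((-φv l : ℝ) * Complex.I)))
        = ((∏ l ∈ (Finset.Icc 1 m).erase k, (4 * Real.sin ((ωv j - φv l)/2)^2) : ℝ) : ℂ) := by
      rw [← Finset.prod_mul_distrib, Complex.ofReal_prod]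
      exact Finset.prod_congr rfl (fun l _ => pexp_pair (ωv j) (φv l))
    have e4 := pexp_tri (ωv j) θ₀ (φv (m+2))
    have e6 := pexp_pair2 (ωv j) (φv k)
    have e5 : ((∏ l ∈ (Finset.Icc 1 m).erase k, (4 * Real.sin ((ωv j - φv l)/2)^2) : ℝ) : ℂ)
        = (4:ℂ)^c * ((∏ l ∈ (Finset.Icc 1 m).erase k, Real.sin ((ωv j - φv l)/2)^2 : ℝ) : ℂ) := by
      rw [Finset.prod_mul_distrib, Finset.prod_const, ← hc]
      push_cast
      ring
    calc (γv j : ℂ) *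
        ((Complex.exp (ωv j * Complex.I) - Complex.exp (φv k * Complex.I)) *
          (∏ l ∈ (Finset.Icc 1 m).erase k,
            (Complex.exp (ωv j * Complex.I) - Complex.exp (φv l * Complex.I))) *
          (Complex.exp (ωv j * Complex.I) - Complex.exp (θ₀ * Complex.I)) *
          (Complex.exp (ωv j * Complex.I) - Complex.exp (φv (m+2) * Complex.I))) *
        (Complex.exp ((-ωv j : ℝ) * Complex.I) *
          ((Complex.exp ((-ωv j : ℝ) * Complex.I) + Complex.exp ((-φv k : ℝ) * Complex.I)) *
          ∏ l ∈ (Finset.Icc 1 m).erase k,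
            (Complex.exp ((-ωv j : ℝ) * Complex.I) - Complex.exp ((-φv l : ℝ) * Complex.I))))
        = ((∏ l ∈ (Finset.Icc 1 m).erase k,
            (Complex.exp (ωv j * Complex.I) - Complex.exp (φv l * Complex.I))) *
          (∏ l ∈ (Finset.Icc 1 m).erase k,
            (Complex.exp ((-ωv j : ℝ) * Complex.I) - Complex.exp ((-φv l : ℝ) * Complex.I)))) *
          (((Complex.exp (ωv j * Complex.I) - Complex.exp (φv k * Complex.I)) *
            (Complex.exp ((-ωv j : ℝ) * Complex.I) + Complex.exp ((-φv k : ℝ) * Complex.I)))) *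
          ((Complex.exp (ωv j * Complex.I) - Complex.exp (θ₀ * Complex.I)) *
            (Complex.exp (ωv j * Complex.I) - Complex.exp (φv (m+2) * Complex.I)) *
            Complex.exp ((-ωv j : ℝ) * Complex.I)) * (γv j : ℂ) := by ring
      _ = _ := by
          rw [e3, e6, e4, e5]
          push_cast
          ring
  rw [Finset.sum_congr rfl key, ← Finset.mul_sum] at hp
  have hK : (-8 * Complex.I * Complex.exp ((((θ₀ + φv (m+2))/2 : ℝ)) * Complex.I) * (4:ℂ)^c) ≠ 0 := by
    exact mul_ne_zero (mul_ne_zero (mul_ne_zero (by norm_num) Complex.I_ne_zero)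
      (Complex.exp_ne_zero _)) (pow_ne_zero _ (by norm_num))
  have h0 := (mul_eq_zero.mp hp).resolve_left hK
  rw [← Complex.ofReal_sum] at h0
  exact_mod_cast h0

/-- Pointwise (in `j`) algebraic identity for the derivative computation. -/
lemma perj (m : ℕ) (x θ₀ : ℝ) (p : ℕ → ℝ) (g w' : ℝ) (d : ℕ → ℝ) (Sv : ℝ)
    (hA : Real.sin ((x - θ₀)/2) ≠ 0) (hB : Real.sin ((x - p (m+2))/2) ≠ 0)
    (hl : ∀ l ∈ Finset.Icc 1 m, Real.sin ((x - p l)/2) ≠ 0)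
    (hSv : Sv = (∑ l ∈ Finset.Icc 1 m, Real.cot ((p l - x)/2)) +
      (1/2) * Real.cot ((θ₀ - x)/2) + (1/2) * Real.cot ((p (m+2) - x)/2)) :
    g * Sv * w' * ((∏ l ∈ Finset.Icc 1 m, Real.sin ((x - p l)/2)^2) *
        (Real.sin ((x - θ₀)/2) * Real.sin ((x - p (m+2))/2)))
      + g * ((∑ l ∈ Finset.Icc 1 m, (∏ r ∈ (Finset.Icc 1 m).erase l, Real.sin ((x - p r)/2)^2) *
            (((2:ℕ):ℝ) * Real.sin ((x - p l)/2) ^ (2-1) * (Real.cos ((x - p l)/2) * ((w' - d l)/2)))) *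
          (Real.sin ((x - θ₀)/2) * Real.sin ((x - p (m+2))/2))
        + (∏ l ∈ Finset.Icc 1 m, Real.sin ((x - p l)/2)^2) *
          (Real.cos ((x - θ₀)/2) * (w'/2) * Real.sin ((x - p (m+2))/2) +
            Real.sin ((x - θ₀)/2) * (Real.cos ((x - p (m+2))/2) * ((w' - d (m+2))/2))))
    = (∑ l ∈ Finset.Icc 1 m, (-(d l)/2) * (g * (Real.sin (x - p l) *
        ((∏ r ∈ (Finset.Icc 1 m).erase l, Real.sin ((x - p r)/2)^2) *
          (Real.sin ((x - θ₀)/2) * Real.sin ((x - p (m+2))/2))))))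
      + (-(d (m+2))/2) * (g * ((∏ l ∈ Finset.Icc 1 m, Real.sin ((x - p l)/2)^2) *
          (Real.sin ((x - θ₀)/2) * Real.cos ((x - p (m+2))/2)))) := by
  have hmain : (∑ l ∈ Finset.Icc 1 m, Real.cot ((p l - x)/2)) *
        (g * w' * ((∏ l ∈ Finset.Icc 1 m, Real.sin ((x - p l)/2)^2) *
          (Real.sin ((x - θ₀)/2) * Real.sin ((x - p (m+2))/2))))
      + (∑ l ∈ Finset.Icc 1 m, (∏ r ∈ (Finset.Icc 1 m).erase l, Real.sin ((x - p r)/2)^2) *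
            (((2:ℕ):ℝ) * Real.sin ((x - p l)/2) ^ (2-1) * (Real.cos ((x - p l)/2) * ((w' - d l)/2)))) *
          (g * (Real.sin ((x - θ₀)/2) * Real.sin ((x - p (m+2))/2)))
      = ∑ l ∈ Finset.Icc 1 m, (-(d l)/2) * (g * (Real.sin (x - p l) *
          ((∏ r ∈ (Finset.Icc 1 m).erase l, Real.sin ((x - p r)/2)^2) *
            (Real.sin ((x - θ₀)/2) * Real.sin ((x - p (m+2))/2))))) := by
    rw [Finset.sum_mul, Finset.sum_mul, ← Finset.sum_add_distrib]
    refine Finset.sum_congr rfl (fun l hl' => ?_)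
    have hsl := hl l hl'
    have hprod : (∏ r ∈ Finset.Icc 1 m, Real.sin ((x - p r)/2)^2)
        = Real.sin ((x - p l)/2)^2 * ∏ r ∈ (Finset.Icc 1 m).erase l, Real.sin ((x - p r)/2)^2 :=
      (Finset.mul_prod_erase _ _ hl').symm
    have hcot : Real.cot ((p l - x)/2) * Real.sin ((x - p l)/2) = -Real.cos ((x - p l)/2) := by
      rw [Real.cot_eq_cos_div_sin, show (p l - x)/2 = -((x - p l)/2) by ring, Real.cos_neg,
        Real.sin_neg, div_neg, neg_mul, div_mul_cancel₀ _ hsl]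
    have hsin2 : Real.sin (x - p l) = 2 * Real.sin ((x - p l)/2) * Real.cos ((x - p l)/2) := by
      rw [← Real.sin_two_mul]
      congr 1
      ring
    rw [hprod]
    push_cast
    linear_combination (g * w' * (∏ r ∈ (Finset.Icc 1 m).erase l, Real.sin ((x - p r)/2)^2) *
        (Real.sin ((x - θ₀)/2) * Real.sin ((x - p (m+2))/2)) * Real.sin ((x - p l)/2)) * hcot
      + ((d l)/2 * g * (∏ r ∈ (Finset.Icc 1 m).erase l, Real.sin ((x - p r)/2)^2) *
        (Real.sin ((x - θ₀)/2) * Real.sin ((x - p (m+2))/2))) * hsin2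
  have h1 : Real.cot ((θ₀ - x)/2) * Real.sin ((x - θ₀)/2) = -Real.cos ((x - θ₀)/2) := by
    rw [Real.cot_eq_cos_div_sin, show (θ₀ - x)/2 = -((x - θ₀)/2) by ring, Real.cos_neg,
      Real.sin_neg, div_neg, neg_mul, div_mul_cancel₀ _ hA]
  have h2 : Real.cot ((p (m+2) - x)/2) * Real.sin ((x - p (m+2))/2)
      = -Real.cos ((x - p (m+2))/2) := by
    rw [Real.cot_eq_cos_div_sin, show (p (m+2) - x)/2 = -((x - p (m+2))/2) by ring, Real.cos_neg,
      Real.sin_neg, div_neg, neg_mul, div_mul_cancel₀ _ hB]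
  rw [hSv]
  linear_combination hmain
    + ((1/2) * g * w' * (∏ l ∈ Finset.Icc 1 m, Real.sin ((x - p l)/2)^2) *
        Real.sin ((x - p (m+2))/2)) * h1
    + ((1/2) * g * w' * (∏ l ∈ Finset.Icc 1 m, Real.sin ((x - p l)/2)^2) *
        Real.sin ((x - θ₀)/2)) * h2


/-- Theorem (discrete measure, constancy): under the discrete paraorthogonality setup
with fixed zero `e^{iθ₀}`, if `W_j(t) = 0` for all `t ∈ I` and all `j`, then
`φ_n'(t) = 0` for all `t ∈ I`, i.e. the zero `ζ(t) = e^{iφ_n(t)}` does not move as `t`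
increases on `I`. -/
theorem discrete_popuc_zero_does_not_move
    -- the open interval `I = (a, b)`
    (a b : ℝ) (hab : a < b)
    -- the masses `γ_j` and mass points `ω_j`, `j = 0, …, N`
    (N : ℕ) (γ ω : ℕ → ℝ → ℝ)
    (hγpos : ∀ j ≤ N, ∀ t ∈ Set.Ioo a b, 0 < γ j t)
    (hγdiff : ∀ j ≤ N, ∀ t ∈ Set.Ioo a b, DifferentiableAt ℝ (γ j) t)
    (hωdiff : ∀ j ≤ N, ∀ t ∈ Set.Ioo a b, DifferentiableAt ℝ (ω j) t)
    -- the zeros `e^{iφ_k(t)}`, `k = 1, …, n`, of the POPUC `P(·; t)`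
    (n : ℕ) (hn : 2 ≤ n) (θ₀ : ℝ) (φ : ℕ → ℝ → ℝ)
    (hφdiff : ∀ k ∈ Finset.Icc 1 n, ∀ t ∈ Set.Ioo a b, DifferentiableAt ℝ (φ k) t)
    (hfix : ∀ t ∈ Set.Ioo a b, φ (n - 1) t = θ₀)
    (P : ℂ → ℝ → ℂ)
    (hP : ∀ z t, P z t = ∏ k ∈ Finset.Icc 1 n, (z - Complex.exp (φ k t * Complex.I)))
    (hdistinct : ∀ t ∈ Set.Ioo a b, ∀ j ∈ Finset.Icc 1 n, ∀ k ∈ Finset.Icc 1 n, j ≠ k →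
      Complex.exp (φ j t * Complex.I) ≠ Complex.exp (φ k t * Complex.I))
    (hsep : ∀ t ∈ Set.Ioo a b, ∀ j ≤ N, ∀ k ∈ Finset.Icc 1 n,
      Complex.exp (ω j t * Complex.I) ≠ Complex.exp (φ k t * Complex.I))
    -- paraorthogonality with respect to the measure `Σ_j γ_j(t) δ(θ − ω_j(t))`
    (hpara : ∀ t ∈ Set.Ioo a b, ∀ g : Polynomial ℂ,
      g.natDegree ≤ n - 1 → g.eval 0 = 0 →
      ∑ j ∈ Finset.range (N + 1), (γ j t : ℂ) *
        P (Complex.exp (ω j t * Complex.I)) t *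
        (starRingEnd ℂ) (g.eval (Complex.exp (ω j t * Complex.I))) = 0)
    -- the functions `s`, `S` and `W_j`
    (s : ℝ → ℝ → ℝ)
    (hs : ∀ θ t, s θ t = Real.sin ((φ n t - θ₀) / 2) /
      (2 * Real.sin ((φ n t - θ) / 2) * Real.sin ((θ₀ - θ) / 2)))
    (S : ℝ → ℝ → ℝ)
    (hS : ∀ θ t, S θ t = (∑ k ∈ Finset.Icc 1 (n - 2), Real.cot ((φ k t - θ) / 2)) +
      (1 / 2) * Real.cot ((θ₀ - θ) / 2) + (1 / 2) * Real.cot ((φ n t - θ) / 2))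
    (W : ℕ → ℝ → ℝ)
    (hW : ∀ j t, W j t = s (ω j t) t * deriv (γ j) t -
      γ j t * s (ω j t) t * S (ω j t) t * deriv (ω j) t)
    -- hypothesis: all the `W_j` vanish identically on `I`
    (hWzero : ∀ t ∈ Set.Ioo a b, ∀ j ≤ N, W j t = 0)
    -- conclusion
    : ∀ t ∈ Set.Ioo a b, deriv (φ n) t = 0 := by

  obtain ⟨m, rfl⟩ : ∃ m, n = m + 2 := ⟨n - 2, by omega⟩
  intro t ht
  have hmem : ∀ k, 1 ≤ k → k ≤ m + 2 → k ∈ Finset.Icc 1 (m+2) :=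
    fun k h1 h2 => Finset.mem_Icc.mpr ⟨h1, h2⟩
  have hθt : ∀ u ∈ Set.Ioo a b, φ (m+1) u = θ₀ := by
    intro u hu
    have h := hfix u hu
    rwa [show m + 2 - 1 = m + 1 from rfl] at h
  -- identity (A), on the whole interval
  have hFA : ∀ u ∈ Set.Ioo a b, ∑ j ∈ Finset.range (N+1), γ j u *
      ((∏ l ∈ Finset.Icc 1 m, Real.sin ((ω j u - φ l u)/2)^2) *
        (Real.sin ((ω j u - θ₀)/2) * Real.sin ((ω j u - φ (m+2) u)/2))) = 0 := by
    intro u hu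
    have hdeg : (Polynomial.X * ∏ l ∈ Finset.Icc 1 m,
        (Polynomial.X - Polynomial.C (Complex.exp (φ l u * Complex.I)))).natDegree ≤ m + 2 - 1 := by
      rw [pg_natDegree, Nat.card_Icc]; omega
    have hev : (Polynomial.X * ∏ l ∈ Finset.Icc 1 m,
        (Polynomial.X - Polynomial.C (Complex.exp (φ l u * Complex.I)))).eval 0 = 0 := by simp
    have hpar := hpara u hu _ hdeg hev
    simp only [hP] at hpar
    exact identA N m (fun j => γ j u) (fun j => ω j u) (fun k => φ k u) θ₀ hpar (hθt u hu)
  -- identities (C_k) at `t`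
  have hFC : ∀ k ∈ Finset.Icc 1 m, ∑ j ∈ Finset.range (N+1), γ j t *
      (Real.sin (ω j t - φ k t) * ((∏ l ∈ (Finset.Icc 1 m).erase k, Real.sin ((ω j t - φ l t)/2)^2) *
        (Real.sin ((ω j t - θ₀)/2) * Real.sin ((ω j t - φ (m+2) t)/2)))) = 0 := by
    intro k hk
    obtain ⟨hk1, hk2⟩ := Finset.mem_Icc.mp hk
    have hdeg : (Polynomial.X * ((Polynomial.X - Polynomial.C (-Complex.exp (φ k t * Complex.I))) *
        ∏ l ∈ (Finset.Icc 1 m).erase k,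
          (Polynomial.X - Polynomial.C (Complex.exp (φ l t * Complex.I))))).natDegree ≤ m + 2 - 1 := by
      rw [pg2_natDegree, Finset.card_erase_of_mem hk, Nat.card_Icc]; omega
    have hev : (Polynomial.X * ((Polynomial.X - Polynomial.C (-Complex.exp (φ k t * Complex.I))) *
        ∏ l ∈ (Finset.Icc 1 m).erase k,
          (Polynomial.X - Polynomial.C (Complex.exp (φ l t * Complex.I))))).eval 0 = 0 := by simp
    have hpar := hpara t ht _ hdeg hev
    simp only [hP] at hpar
    exact identC N m (fun j => γ j t) (fun j => ω j t) (fun r => φ r t) θ₀ k hk hpar (hθt t ht)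
  -- nonvanishing of various sines
  have hsinΔ : Real.sin ((φ (m+2) t - θ₀)/2) ≠ 0 := by
    have hne := hdistinct t ht (m+2) (hmem _ (by omega) (by omega)) (m+1)
      (hmem _ (by omega) (by omega)) (by omega)
    rw [hθt t ht] at hne
    exact psin_ne_zero hne
  have hAne : ∀ j, j ≤ N → Real.sin ((ω j t - θ₀)/2) ≠ 0 := by
    intro j hj
    have h := hsep t ht j hj (m+1) (hmem _ (by omega) (by omega))
    rw [hθt t ht] at h
    exact psin_ne_zero h
  have hBne : ∀ j, j ≤ N → Real.sin ((ω j t - φ (m+2) t)/2) ≠ 0 :=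
    fun j hj => psin_ne_zero (hsep t ht j hj (m+2) (hmem _ (by omega) (by omega)))
  have hlne : ∀ j, j ≤ N → ∀ l ∈ Finset.Icc 1 m, Real.sin ((ω j t - φ l t)/2) ≠ 0 := by
    intro j hj l hl
    obtain ⟨h1, h2⟩ := Finset.mem_Icc.mp hl
    exact psin_ne_zero (hsep t ht j hj l (hmem _ h1 (by omega)))
  -- from `W_j = 0`: `γ_j' = γ_j S(ω_j) ω_j'`
  have hγ' : ∀ j, j ≤ N → deriv (γ j) t = γ j t * S (ω j t) t * deriv (ω j) t := by
    intro j hj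
    have hW0 := hWzero t ht j hj
    rw [hW j t] at hW0
    have hsne : s (ω j t) t ≠ 0 := by
      have h1 : Real.sin ((φ (m+2) t - ω j t)/2) ≠ 0 :=
        psin_ne_zero (Ne.symm (hsep t ht j hj (m+2) (hmem _ (by omega) (by omega))))
      have h2 : Real.sin ((θ₀ - ω j t)/2) ≠ 0 := by
        have h := hsep t ht j hj (m+1) (hmem _ (by omega) (by omega))
        rw [hθt t ht] at h
        exact psin_ne_zero (Ne.symm h)
      rw [hs]
      exact div_ne_zero hsinΔ (mul_ne_zero (mul_ne_zero two_ne_zero h1) h2)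
    have hfac : s (ω j t) t *
        (deriv (γ j) t - γ j t * S (ω j t) t * deriv (ω j) t) = 0 := by
      linear_combination hW0
    have h0 := (mul_eq_zero.mp hfac).resolve_left hsne
    linarith
  -- the derivative of the (A)-sum at `t`
  have hterm : ∀ j ∈ Finset.range (N+1), HasDerivAt
      (fun u => γ j u * ((∏ l ∈ Finset.Icc 1 m, Real.sin ((ω j u - φ l u)/2)^2) *
        (Real.sin ((ω j u - θ₀)/2) * Real.sin ((ω j u - φ (m+2) u)/2))))
      (deriv (γ j) t * ((∏ l ∈ Finset.Icc 1 m, Real.sin ((ω j t - φ l t)/2)^2) *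
        (Real.sin ((ω j t - θ₀)/2) * Real.sin ((ω j t - φ (m+2) t)/2)))
       + γ j t * ((∑ l ∈ Finset.Icc 1 m,
            (∏ r ∈ (Finset.Icc 1 m).erase l, Real.sin ((ω j t - φ r t)/2)^2) •
            (((2:ℕ):ℝ) * Real.sin ((ω j t - φ l t)/2) ^ (2-1) *
              (Real.cos ((ω j t - φ l t)/2) * ((deriv (ω j) t - deriv (φ l) t)/2)))) *
          (Real.sin ((ω j t - θ₀)/2) * Real.sin ((ω j t - φ (m+2) t)/2))
         + (∏ l ∈ Finset.Icc 1 m, Real.sin ((ω j t - φ l t)/2)^2) *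
           ((Real.cos ((ω j t - θ₀)/2) * (deriv (ω j) t / 2)) * Real.sin ((ω j t - φ (m+2) t)/2)
             + Real.sin ((ω j t - θ₀)/2) *
               (Real.cos ((ω j t - φ (m+2) t)/2) * ((deriv (ω j) t - deriv (φ (m+2)) t)/2))))) t := by
    intro j hjr
    have hj : j ≤ N := Finset.mem_range_succ_iff.mp hjr
    have hdω := (hωdiff j hj t ht).hasDerivAt
    have hdγ := (hγdiff j hj t ht).hasDerivAt
    have hdφn := (hφdiff (m+2) (hmem _ (by omega) (by omega)) t ht).hasDerivAt
    have hA : HasDerivAt (fun u => Real.sin ((ω j u - θ₀)/2))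
        (Real.cos ((ω j t - θ₀)/2) * (deriv (ω j) t / 2)) t :=
      ((hdω.sub_const θ₀).div_const 2).sin
    have hB : HasDerivAt (fun u => Real.sin ((ω j u - φ (m+2) u)/2))
        (Real.cos ((ω j t - φ (m+2) t)/2) * ((deriv (ω j) t - deriv (φ (m+2)) t)/2)) t :=
      ((hdω.sub hdφn).div_const 2).sin
    have hΛ : HasDerivAt (fun u => ∏ l ∈ Finset.Icc 1 m, Real.sin ((ω j u - φ l u)/2)^2)
        (∑ l ∈ Finset.Icc 1 m,
          (∏ r ∈ (Finset.Icc 1 m).erase l, Real.sin ((ω j t - φ r t)/2)^2) •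
          (((2:ℕ):ℝ) * Real.sin ((ω j t - φ l t)/2) ^ (2-1) *
            (Real.cos ((ω j t - φ l t)/2) * ((deriv (ω j) t - deriv (φ l) t)/2)))) t := by
      apply HasDerivAt.fun_finsetProd
      intro l hl
      obtain ⟨h1, h2⟩ := Finset.mem_Icc.mp hl
      have hdφl := (hφdiff l (hmem _ h1 (by omega)) t ht).hasDerivAt
      exact HasDerivAt.fun_pow (((hdω.sub hdφl).div_const 2).sin) 2
    exact hdγ.mul (hΛ.mul (hA.mul hB))
  have hder := HasDerivAt.fun_sum hterm
  have hF0 : HasDerivAt (fun u => ∑ j ∈ Finset.range (N+1), γ j u *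
      ((∏ l ∈ Finset.Icc 1 m, Real.sin ((ω j u - φ l u)/2)^2) *
        (Real.sin ((ω j u - θ₀)/2) * Real.sin ((ω j u - φ (m+2) u)/2)))) 0 t := by
    have hev : (fun u => ∑ j ∈ Finset.range (N+1), γ j u *
        ((∏ l ∈ Finset.Icc 1 m, Real.sin ((ω j u - φ l u)/2)^2) *
          (Real.sin ((ω j u - θ₀)/2) * Real.sin ((ω j u - φ (m+2) u)/2))))
        =ᶠ[nhds t] (fun _ => (0:ℝ)) := by
      filter_upwards [Ioo_mem_nhds ht.1 ht.2] with u hu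
      exact hFA u hu
    exact (hasDerivAt_const t (0:ℝ)).congr_of_eventuallyEq hev
  have hDeq := hder.unique hF0
  simp only [smul_eq_mul] at hDeq
  -- rewrite the derivative using the orthogonality identities
  have hkey : ∑ j ∈ Finset.range (N+1),
      ((∑ l ∈ Finset.Icc 1 m, (-(deriv (φ l) t)/2) * (γ j t * (Real.sin (ω j t - φ l t) *
        ((∏ r ∈ (Finset.Icc 1 m).erase l, Real.sin ((ω j t - φ r t)/2)^2) *
          (Real.sin ((ω j t - θ₀)/2) * Real.sin ((ω j t - φ (m+2) t)/2))))))
       + (-(deriv (φ (m+2)) t)/2) * (γ j t *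
          ((∏ l ∈ Finset.Icc 1 m, Real.sin ((ω j t - φ l t)/2)^2) *
            (Real.sin ((ω j t - θ₀)/2) * Real.cos ((ω j t - φ (m+2) t)/2))))) = 0 := by
    rw [← hDeq]
    refine Finset.sum_congr rfl (fun j hjr => ?_)
    have hj : j ≤ N := Finset.mem_range_succ_iff.mp hjr
    rw [hγ' j hj]
    have hSj : S (ω j t) t = (∑ l ∈ Finset.Icc 1 m, Real.cot ((φ l t - ω j t)/2)) +
        (1/2) * Real.cot ((θ₀ - ω j t)/2) + (1/2) * Real.cot ((φ (m+2) t - ω j t)/2) := by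
      rw [hS]
      norm_num
    exact (perj m (ω j t) θ₀ (fun l => φ l t) (γ j t) (deriv (ω j) t)
      (fun l => deriv (φ l) t) (S (ω j t) t) (hAne j hj) (hBne j hj) (hlne j hj) hSj).symm
  have hswap : ∑ j ∈ Finset.range (N+1),
      ((∑ l ∈ Finset.Icc 1 m, (-(deriv (φ l) t)/2) * (γ j t * (Real.sin (ω j t - φ l t) *
        ((∏ r ∈ (Finset.Icc 1 m).erase l, Real.sin ((ω j t - φ r t)/2)^2) *
          (Real.sin ((ω j t - θ₀)/2) * Real.sin ((ω j t - φ (m+2) t)/2))))))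
       + (-(deriv (φ (m+2)) t)/2) * (γ j t *
          ((∏ l ∈ Finset.Icc 1 m, Real.sin ((ω j t - φ l t)/2)^2) *
            (Real.sin ((ω j t - θ₀)/2) * Real.cos ((ω j t - φ (m+2) t)/2)))))
      = (∑ l ∈ Finset.Icc 1 m, (-(deriv (φ l) t)/2) *
          (∑ j ∈ Finset.range (N+1), γ j t * (Real.sin (ω j t - φ l t) *
            ((∏ r ∈ (Finset.Icc 1 m).erase l, Real.sin ((ω j t - φ r t)/2)^2) *
              (Real.sin ((ω j t - θ₀)/2) * Real.sin ((ω j t - φ (m+2) t)/2))))))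
        + (-(deriv (φ (m+2)) t)/2) *
          (∑ j ∈ Finset.range (N+1), γ j t *
            ((∏ l ∈ Finset.Icc 1 m, Real.sin ((ω j t - φ l t)/2)^2) *
              (Real.sin ((ω j t - θ₀)/2) * Real.cos ((ω j t - φ (m+2) t)/2)))) := by
    rw [Finset.sum_add_distrib, Finset.sum_comm, ← Finset.mul_sum]
    congr 1
    refine Finset.sum_congr rfl (fun l hl => ?_)
    rw [← Finset.mul_sum]
  rw [hswap] at hkey
  have hCzero : ∀ l ∈ Finset.Icc 1 m, (-(deriv (φ l) t)/2) *
      (∑ j ∈ Finset.range (N+1), γ j t * (Real.sin (ω j t - φ l t) *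
        ((∏ r ∈ (Finset.Icc 1 m).erase l, Real.sin ((ω j t - φ r t)/2)^2) *
          (Real.sin ((ω j t - θ₀)/2) * Real.sin ((ω j t - φ (m+2) t)/2))))) = 0 :=
    fun l hl => by rw [hFC l hl, mul_zero]
  rw [Finset.sum_congr rfl hCzero, Finset.sum_const_zero, zero_add] at hkey
  -- positivity of the remaining sum
  have hXeq : ∑ j ∈ Finset.range (N+1), γ j t *
      ((∏ l ∈ Finset.Icc 1 m, Real.sin ((ω j t - φ l t)/2)^2) *
        (Real.sin ((ω j t - θ₀)/2) * Real.sin ((ω j t - θ₀)/2)))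
      = Real.sin ((φ (m+2) t - θ₀)/2) *
          (∑ j ∈ Finset.range (N+1), γ j t *
            ((∏ l ∈ Finset.Icc 1 m, Real.sin ((ω j t - φ l t)/2)^2) *
              (Real.sin ((ω j t - θ₀)/2) * Real.cos ((ω j t - φ (m+2) t)/2))))
        + Real.cos ((φ (m+2) t - θ₀)/2) *
          (∑ j ∈ Finset.range (N+1), γ j t *
            ((∏ l ∈ Finset.Icc 1 m, Real.sin ((ω j t - φ l t)/2)^2) *
              (Real.sin ((ω j t - θ₀)/2) * Real.sin ((ω j t - φ (m+2) t)/2)))) := by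
    rw [Finset.mul_sum, Finset.mul_sum, ← Finset.sum_add_distrib]
    refine Finset.sum_congr rfl (fun j hjr => ?_)
    rw [show (ω j t - θ₀)/2 = (ω j t - φ (m+2) t)/2 + (φ (m+2) t - θ₀)/2 by ring, Real.sin_add]
    ring
  have hXpos : 0 < ∑ j ∈ Finset.range (N+1), γ j t *
      ((∏ l ∈ Finset.Icc 1 m, Real.sin ((ω j t - φ l t)/2)^2) *
        (Real.sin ((ω j t - θ₀)/2) * Real.sin ((ω j t - θ₀)/2))) := by
    apply Finset.sum_pos'
    · intro j hjr
      have hj : j ≤ N := Finset.mem_range_succ_iff.mp hjr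
      exact mul_nonneg (hγpos j hj t ht).le (mul_nonneg
        (Finset.prod_nonneg (fun l _ => sq_nonneg _)) (mul_self_nonneg _))
    · refine ⟨0, Finset.mem_range.mpr (by omega), ?_⟩
      refine mul_pos (hγpos 0 (by omega) t ht) (mul_pos ?_ ?_)
      · exact Finset.prod_pos (fun l hl =>
          lt_of_le_of_ne (sq_nonneg _) (Ne.symm (pow_ne_zero 2 (hlne 0 (by omega) l hl))))
      · exact mul_self_pos.mpr (hAne 0 (by omega))
  rw [hFA t ht, mul_zero, add_zero] at hXeq
  have hDne : (∑ j ∈ Finset.range (N+1), γ j t *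
      ((∏ l ∈ Finset.Icc 1 m, Real.sin ((ω j t - φ l t)/2)^2) *
        (Real.sin ((ω j t - θ₀)/2) * Real.cos ((ω j t - φ (m+2) t)/2)))) ≠ 0 := by
    intro h0
    rw [h0, mul_zero] at hXeq
    exact absurd hXeq (ne_of_gt hXpos)
  rcases mul_eq_zero.mp hkey with h | h
  · linarith
  · exact absurd h hDne
end

section
/- Under the stated discrete paraorthogonality setup with a conjugate pair of zeros, for every t ∈ I one has the identity φ_n′(t) · Σ_{j=0}^N γ_j(t) · |P(e^{iω_j(t)};t)|² · ( 1/|e^{iω_j(t)} − e^{iφ_n(t)}|² + 1/|e^{iω_j(t)} − e^{−iφ_n(t)}|² ) = 2·sin(φ_n(t)) · Σ_{j=0}^N W̃_j(t) · |P(e^{iω_j(t)};t)|². -/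
open Polynomial

lemma aux_conj_exp (α : ℝ) : (starRingEnd ℂ) (Complex.exp (α * Complex.I)) = Complex.exp (-α * Complex.I) := by
  rw [← Complex.exp_conj]; congr 1; simp

lemma expand_exp (α : ℝ) : Complex.exp (α * Complex.I) = (Real.cos α : ℂ) + (Real.sin α : ℂ) * Complex.I := by
  rw [Complex.exp_mul_I, Complex.ofReal_cos, Complex.ofReal_sin]

lemma expand_exp_neg (α : ℝ) : Complex.exp (-α * Complex.I) = (Real.cos α : ℂ) - (Real.sin α : ℂ) * Complex.I := by
  rw [show (-α * Complex.I : ℂ) = ((-α : ℝ) : ℂ) * Complex.I by push_cast; ring, expand_exp]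
  simp [sub_eq_add_neg]

lemma key1 (α β : ℝ) : (Complex.exp (α * Complex.I) - Complex.exp (β * Complex.I)) *
    (starRingEnd ℂ) (Complex.exp (α * Complex.I) - Complex.exp (β * Complex.I)) =
    ((2 - 2 * Real.cos (α - β) : ℝ) : ℂ) := by
  simp only [map_sub, aux_conj_exp, expand_exp, expand_exp_neg]
  rw [Real.cos_sub]
  have h1 := Real.sin_sq_add_cos_sq α
  have h2 := Real.sin_sq_add_cos_sq β
  apply Complex.ext <;> simp [Complex.cos_ofReal_re, Complex.sin_ofReal_re] <;> nlinarith [h1, h2]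

lemma key2 (α β : ℝ) : (Complex.exp (α * Complex.I) - Complex.exp (β * Complex.I)) *
    (Complex.exp (α * Complex.I) - Complex.exp (-β * Complex.I)) *
    (starRingEnd ℂ) (Complex.exp (α * Complex.I)) =
    ((2 * Real.cos α - 2 * Real.cos β : ℝ) : ℂ) := by
  simp only [aux_conj_exp, expand_exp, expand_exp_neg]
  have h1 := Real.sin_sq_add_cos_sq α
  have h2 := Real.sin_sq_add_cos_sq β
  apply Complex.ext <;> simp [Complex.cos_ofReal_re, Complex.sin_ofReal_re]
  · linear_combination (Real.cos α) * h1 + (Real.cos α) * h2 - 2 * Real.cos β * h1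
  · linear_combination (Real.sin α) * h1 - (Real.sin α) * h2

lemma key3 (α β : ℝ) : (Complex.exp (α * Complex.I) - Complex.exp (β * Complex.I)) *
    (starRingEnd ℂ) (Complex.exp (α * Complex.I) + Complex.exp (β * Complex.I)) =
    ((2 * Real.sin (α - β) : ℝ) : ℂ) * Complex.I := by
  simp only [map_add, aux_conj_exp, expand_exp, expand_exp_neg]
  rw [Real.sin_sub]
  have h1 := Real.sin_sq_add_cos_sq α
  have h2 := Real.sin_sq_add_cos_sq β
  apply Complex.ext <;> simp [Complex.cos_ofReal_re, Complex.sin_ofReal_re] <;> nlinarith [h1, h2]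

lemma key1' (α β : ℝ) : Complex.normSq (Complex.exp (α * Complex.I) - Complex.exp (β * Complex.I)) = 2 - 2 * Real.cos (α - β) := by
  have := key1 α β
  rw [Complex.mul_conj] at this
  exact_mod_cast this

lemma pos1 {α β : ℝ} (h : Complex.exp (α * Complex.I) ≠ Complex.exp (β * Complex.I)) :
    0 < 2 - 2 * Real.cos (α - β) := by
  rw [← key1' α β]
  exact Complex.normSq_pos.mpr (sub_ne_zero.mpr h)

lemma abs_sq_eq (α β : ℝ) : Norm.norm (Complex.exp (α * Complex.I) - Complex.exp (β * Complex.I)) ^ 2 = 2 - 2 * Real.cos (α - β) := by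
  rw [Complex.sq_norm, key1']

lemma quad_prod (o f : ℝ) : (2 - 2 * Real.cos (o - f)) * (2 - 2 * Real.cos (o + f)) = 4 * (Real.cos o - Real.cos f) ^ 2 := by
  rw [Real.cos_sub, Real.cos_add]
  have h1 := Real.sin_sq_add_cos_sq o
  have h2 := Real.sin_sq_add_cos_sq f
  linear_combination (4 * Real.cos f ^ 2 - 4) * h1 + (-4 * Real.sin o ^ 2) * h2

lemma cot_mul (o f : ℝ) (h : 2 - 2 * Real.cos (o - f) ≠ 0) :
    Real.cot ((f - o) / 2) * (2 - 2 * Real.cos (o - f)) = -2 * Real.sin (o - f) := by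
  have hx : o - f = -(2 * ((f - o) / 2)) := by ring
  set x := (f - o) / 2 with hxdef
  rw [hx, Real.cos_neg, Real.sin_neg, Real.cos_two_mul, Real.sin_two_mul]
  have hs : Real.sin x ≠ 0 := by
    intro h0
    rw [hx, Real.cos_neg, Real.cos_two_mul] at h
    have hc := Real.sin_sq_add_cos_sq x
    rw [h0] at hc
    apply h; nlinarith [hc]
  rw [Real.cot_eq_cos_div_sin]
  have hc := Real.sin_sq_add_cos_sq x
  field_simp
  linear_combination (-2 : ℝ) * Real.cos x * hc

lemma claim1 (N m : ℕ) (γ ω φ : ℕ → ℝ → ℝ) (t : ℝ)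
    (hconj : φ (m + 1) t = -φ (m + 2) t)
    (hpara : ∀ g : Polynomial ℂ, g.natDegree ≤ m + 1 → g.eval 0 = 0 →
      ∑ j ∈ Finset.range (N + 1), (γ j t : ℂ) *
        (∏ k ∈ Finset.Icc 1 (m + 2),
          (Complex.exp (ω j t * Complex.I) - Complex.exp (φ k t * Complex.I))) *
        (starRingEnd ℂ) (g.eval (Complex.exp (ω j t * Complex.I))) = 0) :
    ∑ j ∈ Finset.range (N + 1), γ j t * (Real.cos (ω j t) - Real.cos (φ (m + 2) t)) *
      ∏ k ∈ Finset.Icc 1 m, (2 - 2 * Real.cos (ω j t - φ k t)) = 0 := by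
  set z : ℕ → ℂ := fun k => Complex.exp (φ k t * Complex.I) with hzdef
  set g : Polynomial ℂ := X * ∏ k ∈ Finset.Icc 1 m, (X - C (z k)) with hgdef
  have hp : (∏ k ∈ Finset.Icc 1 m, (X - C (z k))).natDegree ≤ m := by
    refine le_trans (Polynomial.natDegree_prod_le _ _) ?_
    refine le_trans (Finset.sum_le_card_nsmul _ _ 1 (fun k _ => by
      simp [Polynomial.natDegree_X_sub_C])) ?_
    simp [Nat.card_Icc]
  have hdeg : g.natDegree ≤ m + 1 := by
    refine le_trans (Polynomial.natDegree_mul_le) ?_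
    have := Polynomial.natDegree_X_le (R := ℂ)
    omega
  have h0 : g.eval 0 = 0 := by simp [hgdef]
  have H := hpara g hdeg h0
  have Hterm : ∀ j ∈ Finset.range (N + 1), (γ j t : ℂ) *
      (∏ k ∈ Finset.Icc 1 (m + 2),
        (Complex.exp (ω j t * Complex.I) - Complex.exp (φ k t * Complex.I))) *
      (starRingEnd ℂ) (g.eval (Complex.exp (ω j t * Complex.I))) =
      ((γ j t * (2 * Real.cos (ω j t) - 2 * Real.cos (φ (m + 2) t)) *
        ∏ k ∈ Finset.Icc 1 m, (2 - 2 * Real.cos (ω j t - φ k t)) : ℝ) : ℂ) := by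
    intro j _
    set w : ℂ := Complex.exp (ω j t * Complex.I) with hwdef
    have hz1 : z (m + 1) = Complex.exp (-(φ (m + 2) t : ℂ) * Complex.I) := by
      rw [hzdef]; simp only []; rw [hconj]; push_cast; ring_nf
    have key2' : (w - z (m + 2)) * (w - z (m + 1)) * (starRingEnd ℂ) w =
        (((2 * Real.cos (ω j t) - 2 * Real.cos (φ (m + 2) t)) : ℝ) : ℂ) := by
      rw [hz1]; exact key2 _ _
    have keyprod : ∏ k ∈ Finset.Icc 1 m, ((w - z k) * (starRingEnd ℂ) (w - z k)) =
        (((∏ k ∈ Finset.Icc 1 m, (2 - 2 * Real.cos (ω j t - φ k t))) : ℝ) : ℂ) := by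
      rw [Complex.ofReal_prod]
      exact Finset.prod_congr rfl fun k _ => key1 _ _
    have hsplit : (∏ k ∈ Finset.Icc 1 (m + 2), (w - z k)) =
        (∏ k ∈ Finset.Icc 1 m, (w - z k)) * (w - z (m + 1)) * (w - z (m + 2)) := by
      rw [Finset.prod_Icc_succ_top (by omega : 1 ≤ m + 2),
        Finset.prod_Icc_succ_top (by omega : 1 ≤ m + 1)]
    have heval : g.eval w = w * ∏ k ∈ Finset.Icc 1 m, (w - z k) := by
      simp [hgdef, Polynomial.eval_prod]
    rw [hsplit, heval, map_mul, map_prod]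
    have : (γ j t : ℂ) * ((∏ k ∈ Finset.Icc 1 m, (w - z k)) * (w - z (m + 1)) * (w - z (m + 2))) *
        ((starRingEnd ℂ) w * ∏ k ∈ Finset.Icc 1 m, (starRingEnd ℂ) (w - z k)) =
        (γ j t : ℂ) * ((w - z (m + 2)) * (w - z (m + 1)) * (starRingEnd ℂ) w) *
        ∏ k ∈ Finset.Icc 1 m, ((w - z k) * (starRingEnd ℂ) (w - z k)) := by
      rw [Finset.prod_mul_distrib]; ring
    rw [this, key2', keyprod]
    push_cast; ring
  rw [Finset.sum_congr rfl Hterm, ← Complex.ofReal_sum] at H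
  have Hreal : ∑ j ∈ Finset.range (N + 1), γ j t *
      (2 * Real.cos (ω j t) - 2 * Real.cos (φ (m + 2) t)) *
      ∏ k ∈ Finset.Icc 1 m, (2 - 2 * Real.cos (ω j t - φ k t)) = 0 := by exact_mod_cast H
  have h2 : ∑ j ∈ Finset.range (N + 1), γ j t * (Real.cos (ω j t) - Real.cos (φ (m + 2) t)) *
      ∏ k ∈ Finset.Icc 1 m, (2 - 2 * Real.cos (ω j t - φ k t)) =
      (1 / 2) * ∑ j ∈ Finset.range (N + 1), γ j t *
      (2 * Real.cos (ω j t) - 2 * Real.cos (φ (m + 2) t)) *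
      ∏ k ∈ Finset.Icc 1 m, (2 - 2 * Real.cos (ω j t - φ k t)) := by
    rw [Finset.mul_sum]; exact Finset.sum_congr rfl fun j _ => by ring
  rw [h2, Hreal, mul_zero]

lemma claim2 (N m : ℕ) (γ ω φ : ℕ → ℝ → ℝ) (t : ℝ) (k₀ : ℕ) (hk₀ : k₀ ∈ Finset.Icc 1 m)
    (hconj : φ (m + 1) t = -φ (m + 2) t)
    (hpara : ∀ g : Polynomial ℂ, g.natDegree ≤ m + 1 → g.eval 0 = 0 →
      ∑ j ∈ Finset.range (N + 1), (γ j t : ℂ) *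
        (∏ k ∈ Finset.Icc 1 (m + 2),
          (Complex.exp (ω j t * Complex.I) - Complex.exp (φ k t * Complex.I))) *
        (starRingEnd ℂ) (g.eval (Complex.exp (ω j t * Complex.I))) = 0) :
    ∑ j ∈ Finset.range (N + 1), γ j t * (Real.cos (ω j t) - Real.cos (φ (m + 2) t)) *
      Real.sin (ω j t - φ k₀ t) *
      ∏ k ∈ (Finset.Icc 1 m).erase k₀, (2 - 2 * Real.cos (ω j t - φ k t)) = 0 := by
  set z : ℕ → ℂ := fun k => Complex.exp (φ k t * Complex.I) with hzdef
  set g : Polynomial ℂ := X * (X + C (z k₀)) * ∏ k ∈ (Finset.Icc 1 m).erase k₀, (X - C (z k))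
    with hgdef
  have hm : 1 ≤ m := by
    have := Finset.mem_Icc.mp hk₀; omega
  have hp : (∏ k ∈ (Finset.Icc 1 m).erase k₀, (X - C (z k))).natDegree ≤ m - 1 := by
    refine le_trans (Polynomial.natDegree_prod_le _ _) ?_
    refine le_trans (Finset.sum_le_card_nsmul _ _ 1 (fun k _ => by
      simp [Polynomial.natDegree_X_sub_C])) ?_
    simp [Finset.card_erase_of_mem hk₀, Nat.card_Icc]
  have hdeg : g.natDegree ≤ m + 1 := by
    refine le_trans (Polynomial.natDegree_mul_le) ?_
    have h1 : (X * (X + C (z k₀)) : Polynomial ℂ).natDegree ≤ 2 := by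
      refine le_trans (Polynomial.natDegree_mul_le) ?_
      have := Polynomial.natDegree_X_le (R := ℂ)
      have := Polynomial.natDegree_X_add_C (z k₀)
      omega
    omega
  have h0 : g.eval 0 = 0 := by simp [hgdef]
  have H := hpara g hdeg h0
  have Hterm : ∀ j ∈ Finset.range (N + 1), (γ j t : ℂ) *
      (∏ k ∈ Finset.Icc 1 (m + 2),
        (Complex.exp (ω j t * Complex.I) - Complex.exp (φ k t * Complex.I))) *
      (starRingEnd ℂ) (g.eval (Complex.exp (ω j t * Complex.I))) =
      ((γ j t * (2 * Real.cos (ω j t) - 2 * Real.cos (φ (m + 2) t)) *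
        (2 * Real.sin (ω j t - φ k₀ t)) *
        ∏ k ∈ (Finset.Icc 1 m).erase k₀, (2 - 2 * Real.cos (ω j t - φ k t)) : ℝ) : ℂ) *
        Complex.I := by
    intro j _
    set w : ℂ := Complex.exp (ω j t * Complex.I) with hwdef
    have hz1 : z (m + 1) = Complex.exp (-(φ (m + 2) t : ℂ) * Complex.I) := by
      rw [hzdef]; simp only []; rw [hconj]; push_cast; ring_nf
    have key2' : (w - z (m + 2)) * (w - z (m + 1)) * (starRingEnd ℂ) w =
        (((2 * Real.cos (ω j t) - 2 * Real.cos (φ (m + 2) t)) : ℝ) : ℂ) := by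
      rw [hz1]; exact key2 _ _
    have key3' : (w - z k₀) * (starRingEnd ℂ) (w + z k₀) =
        (((2 * Real.sin (ω j t - φ k₀ t)) : ℝ) : ℂ) * Complex.I := key3 _ _
    have keyprod : ∏ k ∈ (Finset.Icc 1 m).erase k₀, ((w - z k) * (starRingEnd ℂ) (w - z k)) =
        (((∏ k ∈ (Finset.Icc 1 m).erase k₀, (2 - 2 * Real.cos (ω j t - φ k t))) : ℝ) : ℂ) := by
      rw [Complex.ofReal_prod]
      exact Finset.prod_congr rfl fun k _ => key1 _ _
    have hsplit : (∏ k ∈ Finset.Icc 1 (m + 2), (w - z k)) =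
        ((w - z k₀) * ∏ k ∈ (Finset.Icc 1 m).erase k₀, (w - z k)) * (w - z (m + 1)) *
          (w - z (m + 2)) := by
      rw [Finset.prod_Icc_succ_top (by omega : 1 ≤ m + 2),
        Finset.prod_Icc_succ_top (by omega : 1 ≤ m + 1), ← Finset.mul_prod_erase _ _ hk₀]
    have heval : g.eval w = w * (w + z k₀) * ∏ k ∈ (Finset.Icc 1 m).erase k₀, (w - z k) := by
      simp [hgdef, Polynomial.eval_prod]
    rw [hsplit, heval, map_mul, map_mul, map_prod]
    have : (γ j t : ℂ) *
        (((w - z k₀) * ∏ k ∈ (Finset.Icc 1 m).erase k₀, (w - z k)) * (w - z (m + 1)) *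
          (w - z (m + 2))) *
        ((starRingEnd ℂ) w * (starRingEnd ℂ) (w + z k₀) *
          ∏ k ∈ (Finset.Icc 1 m).erase k₀, (starRingEnd ℂ) (w - z k)) =
        (γ j t : ℂ) * ((w - z (m + 2)) * (w - z (m + 1)) * (starRingEnd ℂ) w) *
        ((w - z k₀) * (starRingEnd ℂ) (w + z k₀)) *
        ∏ k ∈ (Finset.Icc 1 m).erase k₀, ((w - z k) * (starRingEnd ℂ) (w - z k)) := by
      rw [Finset.prod_mul_distrib]; ring
    rw [this, key2', key3', keyprod]
    push_cast; ring
  rw [Finset.sum_congr rfl Hterm, ← Finset.sum_mul, ← Complex.ofReal_sum] at H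
  rcases mul_eq_zero.mp H with h | h
  · have Hreal : ∑ j ∈ Finset.range (N + 1), γ j t *
        (2 * Real.cos (ω j t) - 2 * Real.cos (φ (m + 2) t)) * (2 * Real.sin (ω j t - φ k₀ t)) *
        ∏ k ∈ (Finset.Icc 1 m).erase k₀, (2 - 2 * Real.cos (ω j t - φ k t)) = 0 := by
      exact_mod_cast h
    have h2 : ∑ j ∈ Finset.range (N + 1), γ j t *
        (Real.cos (ω j t) - Real.cos (φ (m + 2) t)) * Real.sin (ω j t - φ k₀ t) *
        ∏ k ∈ (Finset.Icc 1 m).erase k₀, (2 - 2 * Real.cos (ω j t - φ k t)) =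
        (1 / 4) * ∑ j ∈ Finset.range (N + 1), γ j t *
        (2 * Real.cos (ω j t) - 2 * Real.cos (φ (m + 2) t)) * (2 * Real.sin (ω j t - φ k₀ t)) *
        ∏ k ∈ (Finset.Icc 1 m).erase k₀, (2 - 2 * Real.cos (ω j t - φ k t)) := by
      rw [Finset.mul_sum]; exact Finset.sum_congr rfl fun j _ => by ring
    rw [h2, Hreal, mul_zero]
  · exact absurd h Complex.I_ne_zero


lemma claim3 (N m : ℕ) (γ ω φ : ℕ → ℝ → ℝ) (a b t : ℝ) (ht : t ∈ Set.Ioo a b)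
    (hγ : ∀ j ≤ N, DifferentiableAt ℝ (γ j) t)
    (hω : ∀ j ≤ N, DifferentiableAt ℝ (ω j) t)
    (hφ : ∀ k ∈ Finset.Icc 1 (m + 2), DifferentiableAt ℝ (φ k) t)
    (hzero : ∀ s ∈ Set.Ioo a b, ∑ j ∈ Finset.range (N + 1), γ j s *
      ((Real.cos (ω j s) - Real.cos (φ (m + 2) s)) *
        ∏ k ∈ Finset.Icc 1 m, (2 - 2 * Real.cos (ω j s - φ k s))) = 0) :
    ∑ j ∈ Finset.range (N + 1),
      (deriv (γ j) t * ((Real.cos (ω j t) - Real.cos (φ (m + 2) t)) *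
          ∏ k ∈ Finset.Icc 1 m, (2 - 2 * Real.cos (ω j t - φ k t)))
        + γ j t * ((-Real.sin (ω j t) * deriv (ω j) t +
            Real.sin (φ (m + 2) t) * deriv (φ (m + 2)) t) *
          ∏ k ∈ Finset.Icc 1 m, (2 - 2 * Real.cos (ω j t - φ k t)))
        + γ j t * ((Real.cos (ω j t) - Real.cos (φ (m + 2) t)) *
          ∑ k ∈ Finset.Icc 1 m,
            (∏ l ∈ (Finset.Icc 1 m).erase k, (2 - 2 * Real.cos (ω j t - φ l t))) *
            (2 * Real.sin (ω j t - φ k t) * (deriv (ω j) t - deriv (φ k) t)))) = 0 := by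
  have hsum : HasDerivAt (fun s => ∑ j ∈ Finset.range (N + 1), γ j s *
      ((Real.cos (ω j s) - Real.cos (φ (m + 2) s)) *
        ∏ k ∈ Finset.Icc 1 m, (2 - 2 * Real.cos (ω j s - φ k s))))
      (∑ j ∈ Finset.range (N + 1),
      (deriv (γ j) t * ((Real.cos (ω j t) - Real.cos (φ (m + 2) t)) *
          ∏ k ∈ Finset.Icc 1 m, (2 - 2 * Real.cos (ω j t - φ k t)))
        + γ j t * ((-Real.sin (ω j t) * deriv (ω j) t +
            Real.sin (φ (m + 2) t) * deriv (φ (m + 2)) t) *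
          ∏ k ∈ Finset.Icc 1 m, (2 - 2 * Real.cos (ω j t - φ k t)))
        + γ j t * ((Real.cos (ω j t) - Real.cos (φ (m + 2) t)) *
          ∑ k ∈ Finset.Icc 1 m,
            (∏ l ∈ (Finset.Icc 1 m).erase k, (2 - 2 * Real.cos (ω j t - φ l t))) *
            (2 * Real.sin (ω j t - φ k t) * (deriv (ω j) t - deriv (φ k) t))))) t := by
    apply HasDerivAt.fun_sum
    intro j hj
    have hjN : j ≤ N := Finset.mem_range_succ_iff.mp hj
    have hγj : HasDerivAt (γ j) (deriv (γ j) t) t := (hγ j hjN).hasDerivAt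
    have hωj : HasDerivAt (ω j) (deriv (ω j) t) t := (hω j hjN).hasDerivAt
    have hφn : HasDerivAt (φ (m + 2)) (deriv (φ (m + 2)) t) t :=
      (hφ (m + 2) (by simp)).hasDerivAt
    have hprod : HasDerivAt (fun s => ∏ k ∈ Finset.Icc 1 m, (2 - 2 * Real.cos (ω j s - φ k s)))
        (∑ k ∈ Finset.Icc 1 m,
          (∏ l ∈ (Finset.Icc 1 m).erase k, (2 - 2 * Real.cos (ω j t - φ l t))) *
          (2 * Real.sin (ω j t - φ k t) * (deriv (ω j) t - deriv (φ k) t))) t := by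
      have hf : ∀ k ∈ Finset.Icc 1 m, HasDerivAt (fun s => 2 - 2 * Real.cos (ω j s - φ k s))
          (2 * Real.sin (ω j t - φ k t) * (deriv (ω j) t - deriv (φ k) t)) t := by
        intro k hk
        have hφk : HasDerivAt (φ k) (deriv (φ k) t) t := by
          refine (hφ k ?_).hasDerivAt
          simp only [Finset.mem_Icc] at hk ⊢; omega
        have h1 := ((hωj.fun_sub hφk).cos.const_mul (2 : ℝ))
        have h2 := (hasDerivAt_const t (2 : ℝ)).fun_sub h1
        exact h2.congr_deriv (by ring)
      have := HasDerivAt.fun_finset_prod hf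
      refine this.congr_deriv ?_
      simp [smul_eq_mul]
    have hcos : HasDerivAt (fun s => Real.cos (ω j s) - Real.cos (φ (m + 2) s))
        (-Real.sin (ω j t) * deriv (ω j) t + Real.sin (φ (m + 2) t) * deriv (φ (m + 2)) t) t :=
      (hωj.cos.fun_sub hφn.cos).congr_deriv (by ring)
    exact (hγj.fun_mul (hcos.fun_mul hprod)).congr_deriv (by ring)
  have heq : (fun s => ∑ j ∈ Finset.range (N + 1), γ j s *
      ((Real.cos (ω j s) - Real.cos (φ (m + 2) s)) *
        ∏ k ∈ Finset.Icc 1 m, (2 - 2 * Real.cos (ω j s - φ k s)))) =ᶠ[nhds t]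
      (fun _ => (0 : ℝ)) := by
    filter_upwards [Ioo_mem_nhds ht.1 ht.2] with s hs using hzero s hs
  have hGzero := heq.deriv_eq
  rw [hsum.deriv, deriv_const] at hGzero
  exact hGzero


/-- Under the discrete paraorthogonality setup with a conjugate pair of zeros
`e^{±iφ_n(t)}`, the identity
`φ_n'(t) Σ_j γ_j(t) |P(e^{iω_j(t)}; t)|² (1/|e^{iω_j(t)} − e^{iφ_n(t)}|² +
1/|e^{iω_j(t)} − e^{−iφ_n(t)}|²) = 2 sin(φ_n(t)) Σ_j W̃_j(t) |P(e^{iω_j(t)}; t)|²`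
holds for every `t ∈ I`. -/
theorem discrete_popuc_conjugate_pair_derivative_identity
    -- the open interval `I = (a, b)`
    (a b : ℝ) (hab : a < b)
    -- the masses `γ_j` and mass points `ω_j`, `j = 0, …, N`
    (N : ℕ) (γ ω : ℕ → ℝ → ℝ)
    (hγpos : ∀ j ≤ N, ∀ t ∈ Set.Ioo a b, 0 < γ j t)
    (hγdiff : ∀ j ≤ N, ∀ t ∈ Set.Ioo a b, DifferentiableAt ℝ (γ j) t)
    (hωdiff : ∀ j ≤ N, ∀ t ∈ Set.Ioo a b, DifferentiableAt ℝ (ω j) t)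
    -- the zeros `e^{iφ_k(t)}`, `k = 1, …, n`, of the POPUC `P(·; t)`, with the
    -- conjugate pair `e^{±iφ_n(t)}`
    (n : ℕ) (hn : 2 ≤ n) (φ : ℕ → ℝ → ℝ)
    (hφdiff : ∀ k ∈ Finset.Icc 1 n, ∀ t ∈ Set.Ioo a b, DifferentiableAt ℝ (φ k) t)
    (hconj : ∀ t ∈ Set.Ioo a b, φ (n - 1) t = -φ n t)
    (hrange : ∀ t ∈ Set.Ioo a b, φ n t ∈ Set.Ioo 0 Real.pi)
    (P : ℂ → ℝ → ℂ)
    (hP : ∀ z t, P z t = ∏ k ∈ Finset.Icc 1 n, (z - Complex.exp (φ k t * Complex.I)))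
    (hdistinct : ∀ t ∈ Set.Ioo a b, ∀ j ∈ Finset.Icc 1 n, ∀ k ∈ Finset.Icc 1 n, j ≠ k →
      Complex.exp (φ j t * Complex.I) ≠ Complex.exp (φ k t * Complex.I))
    (hsep : ∀ t ∈ Set.Ioo a b, ∀ j ≤ N, ∀ k ∈ Finset.Icc 1 n,
      Complex.exp (ω j t * Complex.I) ≠ Complex.exp (φ k t * Complex.I))
    -- paraorthogonality with respect to the measure `Σ_j γ_j(t) δ(θ − ω_j(t))`
    (hpara : ∀ t ∈ Set.Ioo a b, ∀ g : Polynomial ℂ,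
      g.natDegree ≤ n - 1 → g.eval 0 = 0 →
      ∑ j ∈ Finset.range (N + 1), (γ j t : ℂ) *
        P (Complex.exp (ω j t * Complex.I)) t *
        (starRingEnd ℂ) (g.eval (Complex.exp (ω j t * Complex.I))) = 0)
    -- the functions `s̃`, `S̃` and `W̃_j`
    (s' : ℝ → ℝ → ℝ)
    (hs' : ∀ θ t, s' θ t = 1 / (2 * (Real.cos (φ n t) - Real.cos θ)))
    (S' : ℝ → ℝ → ℝ)
    (hS' : ∀ θ t, S' θ t = Real.sin θ / (Real.cos θ - Real.cos (φ n t)) +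
      ∑ k ∈ Finset.Icc 1 (n - 2), Real.cot ((φ k t - θ) / 2))
    (W' : ℕ → ℝ → ℝ)
    (hW' : ∀ j t, W' j t = s' (ω j t) t * deriv (γ j) t -
      γ j t * s' (ω j t) t * S' (ω j t) t * deriv (ω j) t)
    -- conclusion
    : ∀ t ∈ Set.Ioo a b,
      deriv (φ n) t * ∑ j ∈ Finset.range (N + 1), γ j t *
          ‖P (Complex.exp (ω j t * Complex.I)) t‖ ^ 2 *
          (1 / ‖Complex.exp (ω j t * Complex.I) -
              Complex.exp (φ n t * Complex.I)‖ ^ 2 +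
            1 / ‖Complex.exp (ω j t * Complex.I) -
              Complex.exp (-φ n t * Complex.I)‖ ^ 2)
        = 2 * Real.sin (φ n t) * ∑ j ∈ Finset.range (N + 1), W' j t *
            ‖P (Complex.exp (ω j t * Complex.I)) t‖ ^ 2 := by

  obtain ⟨m, rfl⟩ : ∃ m, n = m + 2 := ⟨n - 2, by omega⟩
  intro t ht
  classical
  have hconj' : ∀ s ∈ Set.Ioo a b, φ (m + 1) s = -φ (m + 2) s := fun s hs => hconj s hs
  have hpara' : ∀ s ∈ Set.Ioo a b, ∀ g : Polynomial ℂ, g.natDegree ≤ m + 1 → g.eval 0 = 0 →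
      ∑ j ∈ Finset.range (N + 1), (γ j s : ℂ) *
        (∏ k ∈ Finset.Icc 1 (m + 2),
          (Complex.exp (ω j s * Complex.I) - Complex.exp (φ k s * Complex.I))) *
        (starRingEnd ℂ) (g.eval (Complex.exp (ω j s * Complex.I))) = 0 := by
    intro s hs g hdeg h0
    have := hpara s hs g hdeg h0
    simpa only [hP] using this
  have E1 : ∀ s ∈ Set.Ioo a b, ∑ j ∈ Finset.range (N + 1), γ j s *
      (Real.cos (ω j s) - Real.cos (φ (m + 2) s)) *
      ∏ k ∈ Finset.Icc 1 m, (2 - 2 * Real.cos (ω j s - φ k s)) = 0 :=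
    fun s hs => claim1 N m γ ω φ s (hconj' s hs) (hpara' s hs)
  have E2 : ∀ k₀ ∈ Finset.Icc 1 m, ∑ j ∈ Finset.range (N + 1), γ j t *
      (Real.cos (ω j t) - Real.cos (φ (m + 2) t)) * Real.sin (ω j t - φ k₀ t) *
      ∏ k ∈ (Finset.Icc 1 m).erase k₀, (2 - 2 * Real.cos (ω j t - φ k t)) = 0 :=
    fun k₀ hk₀ => claim2 N m γ ω φ t k₀ hk₀ (hconj' t ht) (hpara' t ht)
  have E3 := claim3 N m γ ω φ a b t ht
    (fun j hj => hγdiff j hj t ht) (fun j hj => hωdiff j hj t ht)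
    (fun k hk => hφdiff k hk t ht)
    (by
      intro s hs
      have h := E1 s hs
      rw [← h]
      exact Finset.sum_congr rfl fun j _ => by ring)
  have posk : ∀ j ∈ Finset.range (N + 1), ∀ k ∈ Finset.Icc 1 (m + 2),
      0 < 2 - 2 * Real.cos (ω j t - φ k t) :=
    fun j hj k hk => pos1 (hsep t ht j (Finset.mem_range_succ_iff.mp hj) k hk)
  -- the left-hand side per-term rewrite
  have hL : ∀ j ∈ Finset.range (N + 1), γ j t *
      Norm.norm (P (Complex.exp (ω j t * Complex.I)) t) ^ 2 *
      (1 / Norm.norm (Complex.exp (ω j t * Complex.I) -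
          Complex.exp (φ (m + 2) t * Complex.I)) ^ 2 +
        1 / Norm.norm (Complex.exp (ω j t * Complex.I) -
          Complex.exp (-φ (m + 2) t * Complex.I)) ^ 2) =
      γ j t * ((4 - 4 * Real.cos (ω j t) * Real.cos (φ (m + 2) t)) *
        ∏ k ∈ Finset.Icc 1 m, (2 - 2 * Real.cos (ω j t - φ k t))) := by
    intro j hj
    have hA : Norm.norm (Complex.exp (ω j t * Complex.I) -
        Complex.exp (φ (m + 2) t * Complex.I)) ^ 2 =
        2 - 2 * Real.cos (ω j t - φ (m + 2) t) := abs_sq_eq _ _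
    have hB : Norm.norm (Complex.exp (ω j t * Complex.I) -
        Complex.exp (-φ (m + 2) t * Complex.I)) ^ 2 =
        2 - 2 * Real.cos (ω j t + φ (m + 2) t) := by
      have h1 : Complex.exp (-φ (m + 2) t * Complex.I) =
          Complex.exp ((-(φ (m + 2) t) : ℝ) * Complex.I) := by push_cast; ring_nf
      rw [h1, abs_sq_eq, sub_neg_eq_add]
    have habsP : Norm.norm (P (Complex.exp (ω j t * Complex.I)) t) ^ 2 =
        (2 - 2 * Real.cos (ω j t - φ (m + 2) t)) * (2 - 2 * Real.cos (ω j t + φ (m + 2) t)) *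
        ∏ k ∈ Finset.Icc 1 m, (2 - 2 * Real.cos (ω j t - φ k t)) := by
      rw [hP, Complex.sq_norm, map_prod Complex.normSq]
      have h2 : ∏ k ∈ Finset.Icc 1 (m + 2), Complex.normSq
          (Complex.exp (ω j t * Complex.I) - Complex.exp (φ k t * Complex.I)) =
          ∏ k ∈ Finset.Icc 1 (m + 2), (2 - 2 * Real.cos (ω j t - φ k t)) :=
        Finset.prod_congr rfl fun k _ => key1' _ _
      rw [h2, Finset.prod_Icc_succ_top (by omega : 1 ≤ m + 2),
        Finset.prod_Icc_succ_top (by omega : 1 ≤ m + 1), hconj' t ht, sub_neg_eq_add]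
      ring
    have hA0 : 0 < 2 - 2 * Real.cos (ω j t - φ (m + 2) t) :=
      posk j hj (m + 2) (by simp [Finset.mem_Icc])
    have hB0 : 0 < 2 - 2 * Real.cos (ω j t + φ (m + 2) t) := by
      have h3 : 2 - 2 * Real.cos (ω j t + φ (m + 2) t) =
          2 - 2 * Real.cos (ω j t - φ (m + 1) t) := by rw [hconj' t ht, sub_neg_eq_add]
      rw [h3]
      exact posk j hj (m + 1) (by simp [Finset.mem_Icc])
    have hsum : (2 - 2 * Real.cos (ω j t - φ (m + 2) t)) +
        (2 - 2 * Real.cos (ω j t + φ (m + 2) t)) =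
        4 - 4 * Real.cos (ω j t) * Real.cos (φ (m + 2) t) := by
      rw [Real.cos_sub, Real.cos_add]; ring
    rw [habsP, hA, hB]
    rw [← hsum]
    have hA1 : (2 - 2 * Real.cos (ω j t - φ (m + 2) t)) *
        (2 - 2 * Real.cos (ω j t - φ (m + 2) t))⁻¹ = 1 := mul_inv_cancel₀ hA0.ne'
    have hB1 : (2 - 2 * Real.cos (ω j t + φ (m + 2) t)) *
        (2 - 2 * Real.cos (ω j t + φ (m + 2) t))⁻¹ = 1 := mul_inv_cancel₀ hB0.ne'
    linear_combination (γ j t * (∏ k ∈ Finset.Icc 1 m, (2 - 2 * Real.cos (ω j t - φ k t))) *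
      (2 - 2 * Real.cos (ω j t + φ (m + 2) t))) * hA1 +
      (γ j t * (∏ k ∈ Finset.Icc 1 m, (2 - 2 * Real.cos (ω j t - φ k t))) *
      (2 - 2 * Real.cos (ω j t - φ (m + 2) t))) * hB1
  -- the right-hand side per-term rewrite
  have hW : ∀ j ∈ Finset.range (N + 1), W' j t *
      Norm.norm (P (Complex.exp (ω j t * Complex.I)) t) ^ 2 =
      2 * (Real.cos (φ (m + 2) t) - Real.cos (ω j t)) * deriv (γ j) t *
        ∏ k ∈ Finset.Icc 1 m, (2 - 2 * Real.cos (ω j t - φ k t))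
      + 2 * γ j t * deriv (ω j) t * Real.sin (ω j t) *
        ∏ k ∈ Finset.Icc 1 m, (2 - 2 * Real.cos (ω j t - φ k t))
      + 4 * γ j t * deriv (ω j) t * (Real.cos (φ (m + 2) t) - Real.cos (ω j t)) *
        ∑ k ∈ Finset.Icc 1 m, Real.sin (ω j t - φ k t) *
          ∏ l ∈ (Finset.Icc 1 m).erase k, (2 - 2 * Real.cos (ω j t - φ l t)) := by
    intro j hj
    have hA0 : 0 < 2 - 2 * Real.cos (ω j t - φ (m + 2) t) :=
      posk j hj (m + 2) (by simp [Finset.mem_Icc])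
    have hB0 : 0 < 2 - 2 * Real.cos (ω j t + φ (m + 2) t) := by
      have h3 : 2 - 2 * Real.cos (ω j t + φ (m + 2) t) =
          2 - 2 * Real.cos (ω j t - φ (m + 1) t) := by rw [hconj' t ht, sub_neg_eq_add]
      rw [h3]
      exact posk j hj (m + 1) (by simp [Finset.mem_Icc])
    have habsP : Norm.norm (P (Complex.exp (ω j t * Complex.I)) t) ^ 2 =
        (2 - 2 * Real.cos (ω j t - φ (m + 2) t)) * (2 - 2 * Real.cos (ω j t + φ (m + 2) t)) *
        ∏ k ∈ Finset.Icc 1 m, (2 - 2 * Real.cos (ω j t - φ k t)) := by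
      rw [hP, Complex.sq_norm, map_prod Complex.normSq]
      have h2 : ∏ k ∈ Finset.Icc 1 (m + 2), Complex.normSq
          (Complex.exp (ω j t * Complex.I) - Complex.exp (φ k t * Complex.I)) =
          ∏ k ∈ Finset.Icc 1 (m + 2), (2 - 2 * Real.cos (ω j t - φ k t)) :=
        Finset.prod_congr rfl fun k _ => key1' _ _
      rw [h2, Finset.prod_Icc_succ_top (by omega : 1 ≤ m + 2),
        Finset.prod_Icc_succ_top (by omega : 1 ≤ m + 1), hconj' t ht, sub_neg_eq_add]
      ring
    have hAB : (2 - 2 * Real.cos (ω j t - φ (m + 2) t)) *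
        (2 - 2 * Real.cos (ω j t + φ (m + 2) t)) =
        4 * (Real.cos (ω j t) - Real.cos (φ (m + 2) t)) ^ 2 := quad_prod _ _
    have hq : Real.cos (ω j t) - Real.cos (φ (m + 2) t) ≠ 0 := by
      intro h0
      rw [h0] at hAB
      nlinarith [hA0, hB0]
    have habsP2 : Norm.norm (P (Complex.exp (ω j t * Complex.I)) t) ^ 2 =
        4 * (Real.cos (ω j t) - Real.cos (φ (m + 2) t)) ^ 2 *
        ∏ k ∈ Finset.Icc 1 m, (2 - 2 * Real.cos (ω j t - φ k t)) := by
      rw [habsP, hAB]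
    have hScot : S' (ω j t) t * ∏ k ∈ Finset.Icc 1 m, (2 - 2 * Real.cos (ω j t - φ k t)) =
        Real.sin (ω j t) / (Real.cos (ω j t) - Real.cos (φ (m + 2) t)) *
          ∏ k ∈ Finset.Icc 1 m, (2 - 2 * Real.cos (ω j t - φ k t)) +
        ∑ k ∈ Finset.Icc 1 m, (-2 * Real.sin (ω j t - φ k t) *
          ∏ l ∈ (Finset.Icc 1 m).erase k, (2 - 2 * Real.cos (ω j t - φ l t))) := by
      rw [hS', add_mul, Finset.sum_mul]
      congr 1
      refine Finset.sum_congr rfl fun k hk => ?_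
      rw [← Finset.mul_prod_erase _ _ hk, ← mul_assoc,
        cot_mul (ω j t) (φ k t) (ne_of_gt (posk j hj k (by
          simp only [Finset.mem_Icc] at hk ⊢; omega)))]
    have hs'v : s' (ω j t) t = 1 / (2 * (Real.cos (φ (m + 2) t) - Real.cos (ω j t))) := hs' _ _
    have hRR : ∑ k ∈ Finset.Icc 1 m, (-2 * Real.sin (ω j t - φ k t) *
        ∏ l ∈ (Finset.Icc 1 m).erase k, (2 - 2 * Real.cos (ω j t - φ l t))) =
        (-2) * ∑ k ∈ Finset.Icc 1 m, Real.sin (ω j t - φ k t) *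
        ∏ l ∈ (Finset.Icc 1 m).erase k, (2 - 2 * Real.cos (ω j t - φ l t)) := by
      rw [Finset.mul_sum]
      exact Finset.sum_congr rfl fun k _ => by ring
    have hstep : W' j t * Norm.norm (P (Complex.exp (ω j t * Complex.I)) t) ^ 2 =
        (deriv (γ j) t * (4 * (Real.cos (ω j t) - Real.cos (φ (m + 2) t)) ^ 2) *
          (1 / (2 * (Real.cos (φ (m + 2) t) - Real.cos (ω j t))))) *
          ∏ k ∈ Finset.Icc 1 m, (2 - 2 * Real.cos (ω j t - φ k t))
        - (γ j t * deriv (ω j) t * (4 * (Real.cos (ω j t) - Real.cos (φ (m + 2) t)) ^ 2) *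
          (1 / (2 * (Real.cos (φ (m + 2) t) - Real.cos (ω j t))))) *
          (S' (ω j t) t * ∏ k ∈ Finset.Icc 1 m, (2 - 2 * Real.cos (ω j t - φ k t))) := by
      rw [hW', hs'v, habsP2]
      ring
    rw [hstep, hScot, hRR]
    have hq2 : Real.cos (φ (m + 2) t) - Real.cos (ω j t) ≠ 0 := fun h0 => hq (by linarith)
    field_simp
    ring
  rw [Finset.sum_congr rfl hL, Finset.sum_congr rfl hW]
  -- consequence of E1 at t
  have e1 : ∑ j ∈ Finset.range (N + 1), γ j t * Real.cos (ω j t) *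
      ∏ k ∈ Finset.Icc 1 m, (2 - 2 * Real.cos (ω j t - φ k t)) =
      Real.cos (φ (m + 2) t) * ∑ j ∈ Finset.range (N + 1), γ j t *
      ∏ k ∈ Finset.Icc 1 m, (2 - 2 * Real.cos (ω j t - φ k t)) := by
    have h := E1 t ht
    have h2 : ∑ j ∈ Finset.range (N + 1), (γ j t * Real.cos (ω j t) *
        (∏ k ∈ Finset.Icc 1 m, (2 - 2 * Real.cos (ω j t - φ k t))) -
        Real.cos (φ (m + 2) t) * (γ j t *
        ∏ k ∈ Finset.Icc 1 m, (2 - 2 * Real.cos (ω j t - φ k t)))) = 0 := by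
      rw [← h]
      exact Finset.sum_congr rfl fun j _ => by ring
    rw [Finset.sum_sub_distrib, ← Finset.mul_sum] at h2
    linarith
  -- consequence of E3 and E2
  have reshape : ∀ j ∈ Finset.range (N + 1),
      (deriv (γ j) t * ((Real.cos (ω j t) - Real.cos (φ (m + 2) t)) *
          ∏ k ∈ Finset.Icc 1 m, (2 - 2 * Real.cos (ω j t - φ k t)))
        + γ j t * ((-Real.sin (ω j t) * deriv (ω j) t +
            Real.sin (φ (m + 2) t) * deriv (φ (m + 2)) t) *
          ∏ k ∈ Finset.Icc 1 m, (2 - 2 * Real.cos (ω j t - φ k t)))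
        + γ j t * ((Real.cos (ω j t) - Real.cos (φ (m + 2) t)) *
          ∑ k ∈ Finset.Icc 1 m,
            (∏ l ∈ (Finset.Icc 1 m).erase k, (2 - 2 * Real.cos (ω j t - φ l t))) *
            (2 * Real.sin (ω j t - φ k t) * (deriv (ω j) t - deriv (φ k) t)))) =
      (deriv (γ j) t * (Real.cos (ω j t) - Real.cos (φ (m + 2) t)) *
          (∏ k ∈ Finset.Icc 1 m, (2 - 2 * Real.cos (ω j t - φ k t)))
        - γ j t * Real.sin (ω j t) * deriv (ω j) t *
          (∏ k ∈ Finset.Icc 1 m, (2 - 2 * Real.cos (ω j t - φ k t)))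
        + 2 * γ j t * deriv (ω j) t * (Real.cos (ω j t) - Real.cos (φ (m + 2) t)) *
          ∑ k ∈ Finset.Icc 1 m, Real.sin (ω j t - φ k t) *
            ∏ l ∈ (Finset.Icc 1 m).erase k, (2 - 2 * Real.cos (ω j t - φ l t)))
      + (Real.sin (φ (m + 2) t) * deriv (φ (m + 2)) t) * (γ j t *
          ∏ k ∈ Finset.Icc 1 m, (2 - 2 * Real.cos (ω j t - φ k t)))
      - ∑ k ∈ Finset.Icc 1 m, (2 * deriv (φ k) t) * (γ j t *
          (Real.cos (ω j t) - Real.cos (φ (m + 2) t)) * Real.sin (ω j t - φ k t) *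
          ∏ l ∈ (Finset.Icc 1 m).erase k, (2 - 2 * Real.cos (ω j t - φ l t))) := by
    intro j _
    have hsplit : γ j t * ((Real.cos (ω j t) - Real.cos (φ (m + 2) t)) *
        ∑ k ∈ Finset.Icc 1 m,
          (∏ l ∈ (Finset.Icc 1 m).erase k, (2 - 2 * Real.cos (ω j t - φ l t))) *
          (2 * Real.sin (ω j t - φ k t) * (deriv (ω j) t - deriv (φ k) t))) =
        2 * γ j t * deriv (ω j) t * (Real.cos (ω j t) - Real.cos (φ (m + 2) t)) *
          (∑ k ∈ Finset.Icc 1 m, Real.sin (ω j t - φ k t) *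
            ∏ l ∈ (Finset.Icc 1 m).erase k, (2 - 2 * Real.cos (ω j t - φ l t)))
        - ∑ k ∈ Finset.Icc 1 m, (2 * deriv (φ k) t) * (γ j t *
          (Real.cos (ω j t) - Real.cos (φ (m + 2) t)) * Real.sin (ω j t - φ k t) *
          ∏ l ∈ (Finset.Icc 1 m).erase k, (2 - 2 * Real.cos (ω j t - φ l t))) := by
      rw [Finset.mul_sum, Finset.mul_sum, Finset.mul_sum, ← Finset.sum_sub_distrib]
      exact Finset.sum_congr rfl fun k _ => by ring
    rw [hsplit]
    ring
  rw [Finset.sum_congr rfl reshape] at E3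
  rw [Finset.sum_sub_distrib, Finset.sum_add_distrib, ← Finset.mul_sum] at E3
  have hswap : ∑ j ∈ Finset.range (N + 1), ∑ k ∈ Finset.Icc 1 m,
      (2 * deriv (φ k) t) * (γ j t *
        (Real.cos (ω j t) - Real.cos (φ (m + 2) t)) * Real.sin (ω j t - φ k t) *
        ∏ l ∈ (Finset.Icc 1 m).erase k, (2 - 2 * Real.cos (ω j t - φ l t))) = 0 := by
    rw [Finset.sum_comm]
    refine Finset.sum_eq_zero fun k hk => ?_
    rw [← Finset.mul_sum]
    have h := E2 k hk
    rw [show ∑ j ∈ Finset.range (N + 1), γ j t *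
        (Real.cos (ω j t) - Real.cos (φ (m + 2) t)) * Real.sin (ω j t - φ k t) *
        ∏ l ∈ (Finset.Icc 1 m).erase k, (2 - 2 * Real.cos (ω j t - φ l t)) = 0 from h, mul_zero]
  rw [hswap, sub_zero] at E3
  have hT : ∑ j ∈ Finset.range (N + 1),
      (deriv (γ j) t * (Real.cos (ω j t) - Real.cos (φ (m + 2) t)) *
          (∏ k ∈ Finset.Icc 1 m, (2 - 2 * Real.cos (ω j t - φ k t)))
        - γ j t * Real.sin (ω j t) * deriv (ω j) t *
          (∏ k ∈ Finset.Icc 1 m, (2 - 2 * Real.cos (ω j t - φ k t)))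
        + 2 * γ j t * deriv (ω j) t * (Real.cos (ω j t) - Real.cos (φ (m + 2) t)) *
          ∑ k ∈ Finset.Icc 1 m, Real.sin (ω j t - φ k t) *
            ∏ l ∈ (Finset.Icc 1 m).erase k, (2 - 2 * Real.cos (ω j t - φ l t))) =
      -(Real.sin (φ (m + 2) t) * deriv (φ (m + 2)) t) *
        ∑ j ∈ Finset.range (N + 1), γ j t *
          ∏ k ∈ Finset.Icc 1 m, (2 - 2 * Real.cos (ω j t - φ k t)) := by
    linear_combination E3
  -- now combine everything
  have hRight : ∑ j ∈ Finset.range (N + 1),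
      (2 * (Real.cos (φ (m + 2) t) - Real.cos (ω j t)) * deriv (γ j) t *
        ∏ k ∈ Finset.Icc 1 m, (2 - 2 * Real.cos (ω j t - φ k t))
      + 2 * γ j t * deriv (ω j) t * Real.sin (ω j t) *
        ∏ k ∈ Finset.Icc 1 m, (2 - 2 * Real.cos (ω j t - φ k t))
      + 4 * γ j t * deriv (ω j) t * (Real.cos (φ (m + 2) t) - Real.cos (ω j t)) *
        ∑ k ∈ Finset.Icc 1 m, Real.sin (ω j t - φ k t) *
          ∏ l ∈ (Finset.Icc 1 m).erase k, (2 - 2 * Real.cos (ω j t - φ l t))) =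
      (-2) * ∑ j ∈ Finset.range (N + 1),
      (deriv (γ j) t * (Real.cos (ω j t) - Real.cos (φ (m + 2) t)) *
          (∏ k ∈ Finset.Icc 1 m, (2 - 2 * Real.cos (ω j t - φ k t)))
        - γ j t * Real.sin (ω j t) * deriv (ω j) t *
          (∏ k ∈ Finset.Icc 1 m, (2 - 2 * Real.cos (ω j t - φ k t)))
        + 2 * γ j t * deriv (ω j) t * (Real.cos (ω j t) - Real.cos (φ (m + 2) t)) *
          ∑ k ∈ Finset.Icc 1 m, Real.sin (ω j t - φ k t) *
            ∏ l ∈ (Finset.Icc 1 m).erase k, (2 - 2 * Real.cos (ω j t - φ l t))) := by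
    rw [Finset.mul_sum]
    exact Finset.sum_congr rfl fun j _ => by ring
  have hLeft : ∑ j ∈ Finset.range (N + 1), γ j t *
      ((4 - 4 * Real.cos (ω j t) * Real.cos (φ (m + 2) t)) *
        ∏ k ∈ Finset.Icc 1 m, (2 - 2 * Real.cos (ω j t - φ k t))) =
      4 * (∑ j ∈ Finset.range (N + 1), γ j t *
        ∏ k ∈ Finset.Icc 1 m, (2 - 2 * Real.cos (ω j t - φ k t)))
      - 4 * Real.cos (φ (m + 2) t) * ∑ j ∈ Finset.range (N + 1), γ j t * Real.cos (ω j t) *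
        ∏ k ∈ Finset.Icc 1 m, (2 - 2 * Real.cos (ω j t - φ k t)) := by
    rw [Finset.mul_sum, Finset.mul_sum, ← Finset.sum_sub_distrib]
    exact Finset.sum_congr rfl fun j _ => by ring
  rw [hLeft, hRight, hT, e1]
  have hpy := Real.sin_sq_add_cos_sq (φ (m + 2) t)
  linear_combination (-4 * deriv (φ (m + 2)) t * (∑ j ∈ Finset.range (N + 1), γ j t *
    ∏ k ∈ Finset.Icc 1 m, (2 - 2 * Real.cos (ω j t - φ k t)))) * hpy
end
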